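/- arXiv:1705.07944 — 4 statements merged into one kernel-verified Lean document; each statement's English description precedes it below -/
import Mathlib

section
/- Let G be a finite graph and let σ be a proper coloring of G using only colors from a set A, and let τ be a proper coloring using only colors from a set B, with A and B disjoint. Then σ and τ are connected in the recoloring graph H_q (q = |A| + |B|): one can transform σ into τ by recoloring vertices one at a time, always maintaining a proper coloring, by processing the color classes of τ one class at a time. -/
/-- A coloring `c` of the vertices of `G` is proper if adjacent vertices get distinct colors. -/
def IsProperColoring {V α : Type} (G : SimpleGraph V) (c : V → α) : Prop :=
  ∀ u v : V, G.Adj u v → c u ≠ c v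

/-- The recoloring graph on the proper colorings of `G` using colors from the palette `P`:
two colorings are adjacent iff they differ at exactly one vertex. -/
def RecolorGraphOn {V : Type} [Fintype V] (G : SimpleGraph V) (P : Finset ℕ) :
    SimpleGraph {c : V → ℕ // (∀ v, c v ∈ P) ∧ IsProperColoring G c} where
  Adj σ τ := (Finset.univ.filter fun v => σ.1 v ≠ τ.1 v).card = 1
  symm := by
    constructor
    intro σ τ h
    rw [Finset.filter_congr (fun v _ => ne_comm (a := τ.1 v) (b := σ.1 v))]
    exact h
  loopless := by constructor; intro σ h; simp at h

lemma mix_valid {V : Type} [Fintype V] [DecidableEq V]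
    (G : SimpleGraph V) (A B : Finset ℕ) (hAB : Disjoint A B)
    (σ τ : V → ℕ) (hσ : ∀ v, σ v ∈ A) (hτ : ∀ v, τ v ∈ B)
    (hσp : IsProperColoring G σ) (hτp : IsProperColoring G τ) (S : Finset V) :
    (∀ v, (fun v => if v ∈ S then τ v else σ v) v ∈ A ∪ B) ∧
    IsProperColoring G (fun v => if v ∈ S then τ v else σ v) := by
  constructor
  · intro v
    by_cases h : v ∈ S <;> simp [h, hσ v, hτ v]
  · intro u v huv
    by_cases hu : u ∈ S <;> by_cases hv : v ∈ S <;> simp only [hu, hv, if_pos, if_neg,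
      if_true, if_false]
    · exact hτp u v huv
    · exact fun h => Finset.disjoint_left.mp hAB (hσ v) (h ▸ hτ u)
    · exact fun h => Finset.disjoint_left.mp hAB (hσ u) (h ▸ hτ v)
    · exact hσp u v huv

/-- If `σ` is a proper coloring of `G` using only colors from `A` and `τ` is a proper
coloring using only colors from `B`, with `A` and `B` disjoint, then `σ` and `τ` are
connected in the recoloring graph on the palette `A ∪ B`. -/
theorem disjoint_palette_colorings_connected {V : Type} [Fintype V] [DecidableEq V]
    (G : SimpleGraph V) (A B : Finset ℕ) (hAB : Disjoint A B)
    (σ τ : {c : V → ℕ // (∀ v, c v ∈ A ∪ B) ∧ IsProperColoring G c})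
    (hσ : ∀ v, σ.1 v ∈ A) (hτ : ∀ v, τ.1 v ∈ B) :
    (RecolorGraphOn G (A ∪ B)).Reachable σ τ := by
  classical
  set mix : Finset V → {c : V → ℕ // (∀ v, c v ∈ A ∪ B) ∧ IsProperColoring G c} :=
    fun S => ⟨fun v => if v ∈ S then τ.1 v else σ.1 v,
      mix_valid G A B hAB σ.1 τ.1 hσ hτ σ.2.2 τ.2.2 S⟩ with hmix
  have key : ∀ S : Finset V, (RecolorGraphOn G (A ∪ B)).Reachable σ (mix S) := by
    intro S
    induction S using Finset.induction_on with
    | empty =>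
      have : mix ∅ = σ := by
        apply Subtype.ext; funext v; simp [hmix]
      rw [this]
    | @insert a S ha ih =>
      refine ih.trans ?_
      by_cases h : σ.1 a = τ.1 a
      · have : mix S = mix (insert a S) := by
          apply Subtype.ext; funext v
          simp only [hmix, Finset.mem_insert]
          by_cases hv : v = a
          · subst hv; simp [ha, h]
          · simp [hv]
        rw [← this]
      · apply SimpleGraph.Adj.reachable
        show (Finset.univ.filter fun v => (mix S).1 v ≠ (mix (insert a S)).1 v).card = 1
        have : (Finset.univ.filter fun v => (mix S).1 v ≠ (mix (insert a S)).1 v) = {a} := by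
          ext v
          simp only [Finset.mem_filter, Finset.mem_univ, true_and, Finset.mem_singleton,
            hmix, Finset.mem_insert]
          constructor
          · intro hne
            by_contra hv
            apply hne
            simp [hv]
          · intro hv
            subst hv
            simp [ha, h]
        rw [this, Finset.card_singleton]
  have : mix Finset.univ = τ := by
    apply Subtype.ext; funext v; simp [hmix]
  exact this ▸ key Finset.univ
end

section
/- Let G be a finite graph, let U ⊆ V(G), and suppose the subgraph of G induced on U is K-degenerate. Let σ be a proper coloring of G such that no vertex of U receives a color from a set B of K+1 fresh colors (colors not used by σ anywhere). Then there is a path in the recoloring graph from σ to a proper coloring τ that agrees with σ outside U and colors all of U with colors from B. -/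
/-- The recoloring graph: vertices are the proper colorings of `G`, adjacent iff they
differ at exactly one vertex. -/
def RecolorGraph {V α : Type} [Fintype V] [DecidableEq α] (G : SimpleGraph V) :
    SimpleGraph {c : V → α // IsProperColoring G c} where
  Adj σ τ := (Finset.univ.filter fun v => σ.1 v ≠ τ.1 v).card = 1
  symm := by
    constructor
    intro σ τ h
    rw [Finset.filter_congr (fun v _ => ne_comm (a := τ.1 v) (b := σ.1 v))]
    exact h
  loopless := by constructor; intro σ h; simp at h

/-- If the subgraph of `G` induced on `U` is `K`-degenerate (every nonempty subset of `U`
has a vertex with fewer than `K` neighbors inside it), `σ` is a proper coloring, and `B`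
is a set of `K + 1` fresh colors not used anywhere by `σ`, then there is a path in the
recoloring graph from `σ` to a proper coloring agreeing with `σ` off `U` and coloring all
of `U` with colors from `B`. -/
theorem recolor_degenerate_subset {V : Type} [Fintype V] [DecidableEq V]
    (G : SimpleGraph V) [DecidableRel G.Adj] (U : Finset V) (K : ℕ)
    (hdeg : ∀ S : Finset V, S ⊆ U → S.Nonempty →
      ∃ v ∈ S, (S.filter (G.Adj v)).card < K)
    (σ : {c : V → ℕ // IsProperColoring G c}) (B : Finset ℕ) (hB : B.card = K + 1)
    (hfresh : ∀ v : V, σ.1 v ∉ B) :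
    ∃ τ : {c : V → ℕ // IsProperColoring G c},
      (RecolorGraph G).Reachable σ τ ∧
      (∀ v : V, v ∉ U → τ.1 v = σ.1 v) ∧
      (∀ v ∈ U, τ.1 v ∈ B) := by
  classical
  induction U using Finset.strongInduction with
  | _ U ih =>
    rcases U.eq_empty_or_nonempty with rfl | hne
    · exact ⟨σ, SimpleGraph.Reachable.refl σ, fun v _ => rfl, by simp⟩
    · obtain ⟨v, hvU, hvdeg⟩ := hdeg U Finset.Subset.rfl hne
      set U' := U.erase v with hU'
      obtain ⟨τ', hreach, hoff, hin⟩ :=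
        ih U' (Finset.erase_ssubset hvU)
          (fun S hS => hdeg S (hS.trans (Finset.erase_subset _ _)))
      -- choose a color b ∈ B not used by τ' on neighbors of v inside U
      set forb := (U.filter (G.Adj v)).image τ'.1 with hforb
      have hcard : forb.card < B.card := by
        calc forb.card ≤ (U.filter (G.Adj v)).card := Finset.card_image_le
        _ < K := hvdeg
        _ < K + 1 := Nat.lt_succ_self _
        _ = B.card := hB.symm
      obtain ⟨b, hbB, hbforb⟩ : ∃ b ∈ B, b ∉ forb := by
        by_contra h
        push_neg at h
        exact absurd (Finset.card_le_card h) (Nat.not_le.mpr hcard)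
      set c := Function.update τ'.1 v b with hc
      have hcv : c v = b := Function.update_self _ _ _
      have hcw : ∀ w, w ≠ v → c w = τ'.1 w := fun w hw => Function.update_of_ne hw _ _
      have hneq : ∀ y, G.Adj v y → τ'.1 y ≠ b := by
        intro y hadj heq
        by_cases hyU : y ∈ U
        · exact hbforb (by
            rw [hforb]
            exact Finset.mem_image.mpr ⟨y, Finset.mem_filter.mpr ⟨hyU, hadj⟩, heq⟩)
        · have : τ'.1 y = σ.1 y := hoff y (fun h => hyU (Finset.mem_of_mem_erase h))
          exact hfresh y (this ▸ heq ▸ hbB)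
      have hprop : IsProperColoring G c := by
        intro x y hxy
        rcases eq_or_ne x v with rfl | hx
        · have hy : y ≠ x := fun h => G.loopless.irrefl _ (h ▸ hxy)
          rw [hcv, hcw y hy]
          exact fun h => hneq y hxy h.symm
        · rcases eq_or_ne y v with rfl | hy
          · rw [hcv, hcw x hx]
            exact hneq x hxy.symm
          · rw [hcw x hx, hcw y hy]
            exact τ'.2 x y hxy
      have hτ'v : τ'.1 v = σ.1 v := hoff v (Finset.notMem_erase _ _)
      have hvne : τ'.1 v ≠ c v := by
        rw [hcv, hτ'v]; exact fun h => hfresh v (h ▸ hbB)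
      refine ⟨⟨c, hprop⟩, ?_, ?_, ?_⟩
      · refine hreach.trans (SimpleGraph.Adj.reachable ?_)
        show (Finset.univ.filter fun w => τ'.1 w ≠ c w).card = 1
        have : (Finset.univ.filter fun w => τ'.1 w ≠ c w) = {v} := by
          ext w
          simp only [Finset.mem_filter, Finset.mem_univ, true_and, Finset.mem_singleton]
          constructor
          · intro h
            by_contra hw
            exact h (hcw w hw).symm
          · rintro rfl; exact hvne
        rw [this, Finset.card_singleton]
      · intro w hw
        have hwv : w ≠ v := fun h => hw (h ▸ hvU)
        show c w = σ.1 w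
        rw [hcw w hwv]
        exact hoff w (fun h => hw (Finset.mem_of_mem_erase h))
      · intro w hw
        show c w ∈ B
        by_cases hwv : w = v
        · rw [hwv, hcv]; exact hbB
        · rw [hcw w hwv]
          exact hin w (Finset.mem_erase.mpr ⟨hwv, hw⟩)
end

section
/- In the Erdős–Rényi random graph G(n,p) with p = Δ/n for a sufficiently large constant Δ, with probability 1 - o(n^{-1/2}) every vertex subset S with |S| ≤ n/(log Δ)^2 spans at most |S|·Δ/(log Δ)^2 edges. -/
open MeasureTheory Finset
set_option maxHeartbeats 1000000

/-- The binomial random graph `G(n,p)`, encoded as the product Bernoulli measure on the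
indicators of the potential edges. -/
noncomputable def gnp (n : ℕ) (p : ENNReal) (hp : p ≤ 1) :
    Measure ({e : Fin n × Fin n // e.1 < e.2} → Bool) :=
  Measure.pi fun _ => (PMF.bernoulli p.toNNReal (by simpa using ENNReal.toNNReal_mono ENNReal.one_ne_top hp)).toMeasure

/-- The number of edges of the sample `ω` spanned by the vertex set `S`. -/
def edgesIn {n : ℕ} (ω : {e : Fin n × Fin n // e.1 < e.2} → Bool)
    (S : Finset (Fin n)) : ℕ :=
  (Finset.univ.filter fun e : {e : Fin n × Fin n // e.1 < e.2} =>
    e.1.1 ∈ S ∧ e.1.2 ∈ S ∧ ω e = true).card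

def edgeSet {n : ℕ} (S : Finset (Fin n)) : Finset {e : Fin n × Fin n // e.1 < e.2} :=
  Finset.univ.filter fun e => e.1.1 ∈ S ∧ e.1.2 ∈ S

lemma gnp_congr (n : ℕ) {p q : ENNReal} (h1 : p ≤ 1) (h2 : q ≤ 1) (h : p = q) :
    gnp n p h1 = gnp n q h2 := by subst h; rfl

lemma bern_true (p : ENNReal) (hp : p ≤ 1) : (PMF.bernoulli p.toNNReal (by simpa using ENNReal.toNNReal_mono ENNReal.one_ne_top hp)).toMeasure {true} = p := by
  rw [PMF.toMeasure_apply_singleton _ _ (measurableSet_singleton _)]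
  simp [PMF.bernoulli, ne_top_of_le_ne_top ENNReal.one_ne_top hp]

lemma bern_false (p : ENNReal) (hp : p ≤ 1) : (PMF.bernoulli p.toNNReal (by simpa using ENNReal.toNNReal_mono ENNReal.one_ne_top hp)).toMeasure {false} = 1 - p := by
  rw [PMF.toMeasure_apply_singleton _ _ (measurableSet_singleton _)]
  simp [PMF.bernoulli, ENNReal.coe_sub, ne_top_of_le_ne_top ENNReal.one_ne_top hp]

-- cylinder measure
lemma cyl_measure {n : ℕ} (p : ENNReal) (hp : p ≤ 1)
    (F T : Finset {e : Fin n × Fin n // e.1 < e.2}) (hTF : T ⊆ F) :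
    gnp n p hp {ω | ∀ e ∈ F, ω e = decide (e ∈ T)}
      = p ^ T.card * (1-p) ^ (F.card - T.card) := by
  classical
  have hset : {ω : {e : Fin n × Fin n // e.1 < e.2} → Bool | ∀ e ∈ F, ω e = decide (e ∈ T)}
      = Set.univ.pi (fun e => if e ∈ F then {decide (e ∈ T)} else Set.univ) := by
    ext ω
    simp only [Set.mem_setOf_eq, Set.mem_pi, Set.mem_univ, true_imp_iff]
    constructor
    · intro h e
      by_cases he : e ∈ F <;> simp [he, h e]
    · intro h e he
      have := h e
      simpa [he] using this
  rw [gnp, hset, Measure.pi_pi]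
  have : ∀ e : {e : Fin n × Fin n // e.1 < e.2},
      (PMF.bernoulli p.toNNReal (by simpa using ENNReal.toNNReal_mono ENNReal.one_ne_top hp)).toMeasure (if e ∈ F then {decide (e ∈ T)} else Set.univ)
      = if e ∈ F then (if e ∈ T then p else 1 - p) else 1 := by
    intro e
    by_cases he : e ∈ F
    · by_cases heT : e ∈ T <;> simp [he, heT, bern_true, bern_false, PMF.bernoulli, ENNReal.coe_sub, ne_top_of_le_ne_top ENNReal.one_ne_top hp]
    · rw [if_neg he, if_neg he]; exact measure_univ
  rw [Finset.prod_congr rfl (fun e _ => this e)]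
  rw [Finset.prod_ite_mem, Finset.univ_inter, Finset.prod_ite, Finset.prod_const,
    Finset.prod_const]
  have h1 : F.filter (· ∈ T) = T := by
    rw [Finset.filter_mem_eq_inter, Finset.inter_eq_right.mpr hTF]
  have h2 : (F.filter (· ∉ T)).card = F.card - T.card := by
    rw [Finset.filter_not, Finset.card_sdiff_of_subset]
    · rw [h1]
    · rw [h1]; exact hTF
  rw [h1, h2]

lemma edgeSet_card {n : ℕ} (S : Finset (Fin n)) : (edgeSet S).card = S.card.choose 2 := by
  classical
  rw [← Finset.card_powersetCard]
  apply Finset.card_bij (fun e _ => ({e.1.1, e.1.2} : Finset (Fin n)))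
  · intro e he
    rw [edgeSet, Finset.mem_filter] at he
    rw [Finset.mem_powersetCard]
    refine ⟨?_, ?_⟩
    · intro x hx
      rcases Finset.mem_insert.mp hx with h | h
      · subst h; exact he.2.1
      · rw [Finset.mem_singleton] at h; subst h; exact he.2.2
    · rw [Finset.card_insert_of_notMem, Finset.card_singleton]
      rw [Finset.mem_singleton]
      exact fun h => absurd (h ▸ e.2) (lt_irrefl _)
  · intro e1 h1 e2 h2 heq
    have ha : e1.1.1 ∈ ({e2.1.1, e2.1.2} : Finset (Fin n)) := by
      rw [← heq]; simp
    have hb : e1.1.2 ∈ ({e2.1.1, e2.1.2} : Finset (Fin n)) := by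
      rw [← heq]; simp
    have hlt1 := e1.2; have hlt2 := e2.2
    simp only [Finset.mem_insert, Finset.mem_singleton] at ha hb
    apply Subtype.ext
    rcases ha with h | h <;> rcases hb with h' | h'
    · exact absurd (h ▸ h' ▸ hlt1) (lt_irrefl _)
    · exact Prod.ext h h'
    · exfalso
      rw [h] at hlt1; rw [h'] at hlt1
      exact absurd (hlt1.trans hlt2) (lt_irrefl _)
    · exact absurd (h ▸ h' ▸ hlt1) (lt_irrefl _)
  · intro U hU
    rw [Finset.mem_powersetCard] at hU
    obtain ⟨a, b, hab, rfl⟩ := Finset.card_eq_two.mp hU.2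
    rcases lt_or_gt_of_ne hab with h | h
    · refine ⟨⟨(a, b), h⟩, ?_, rfl⟩
      rw [edgeSet, Finset.mem_filter]
      exact ⟨Finset.mem_univ _, hU.1 (by simp), hU.1 (by simp)⟩
    · refine ⟨⟨(b, a), h⟩, ?_, ?_⟩
      · rw [edgeSet, Finset.mem_filter]
        exact ⟨Finset.mem_univ _, hU.1 (by simp), hU.1 (by simp)⟩
      · exact Finset.pair_comm b a

lemma event_le {n : ℕ} (p : ENNReal) (hp : p ≤ 1) (S : Finset (Fin n)) (k : ℕ) :
    gnp n p hp {ω | k ≤ edgesIn ω S}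
      ≤ ∑ T ∈ (edgeSet S).powerset.filter (fun T => k ≤ T.card),
          p ^ T.card * (1-p) ^ ((edgeSet S).card - T.card) := by
  classical
  have hsub : {ω : {e : Fin n × Fin n // e.1 < e.2} → Bool | k ≤ edgesIn ω S}
      ⊆ ⋃ T ∈ (edgeSet S).powerset.filter (fun T => k ≤ T.card),
          {ω | ∀ e ∈ edgeSet S, ω e = decide (e ∈ T)} := by
    intro ω hω
    have hcard : ((edgeSet S).filter (fun e => ω e = true)).card = edgesIn ω S := by
      rw [edgeSet, Finset.filter_filter, edgesIn]
      congr 1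
      apply Finset.filter_congr
      intro e _
      simp [and_assoc]
    have hmem : (edgeSet S).filter (fun e => ω e = true)
        ∈ (edgeSet S).powerset.filter (fun T => k ≤ T.card) := by
      rw [Finset.mem_filter, Finset.mem_powerset]
      exact ⟨Finset.filter_subset _ _, by rw [hcard]; exact hω⟩
    refine Set.mem_biUnion hmem ?_
    intro e he
    by_cases h : ω e = true <;> simp [Finset.mem_filter, he, h]
  refine (measure_mono hsub).trans ?_
  refine (measure_biUnion_finset_le _ _).trans ?_
  apply Finset.sum_le_sum
  intro T hT
  rw [Finset.mem_filter, Finset.mem_powerset] at hT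
  rw [cyl_measure p hp _ _ hT.1]

lemma choose_le_real (n s : ℕ) (hs : 0 < s) (hsn : s ≤ n) :
    (n.choose s : ℝ) ≤ ((n : ℝ)/s)^s * Real.exp s := by
  have hn : 0 < n := lt_of_lt_of_le hs hsn
  have hnR : (0:ℝ) < n := by exact_mod_cast hn
  have hsR : (0:ℝ) < s := by exact_mod_cast hs
  set x : ℝ := (s:ℝ)/n with hx
  have hx0 : 0 < x := div_pos hsR hnR
  have h1 : (n.choose s : ℝ) * x^s ≤ (1+x)^n := by
    have := Finset.single_le_sum (f := fun j => x^j * (1:ℝ)^(n-j) * n.choose j)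
      (fun j _ => by positivity) (Finset.mem_range.mpr (Nat.lt_succ_of_le hsn))
    rw [← add_pow] at this
    calc (n.choose s : ℝ) * x^s = x^s * 1^(n-s) * n.choose s := by ring
    _ ≤ (x+1)^n := this
    _ = (1+x)^n := by ring_nf
  have h2 : (1+x)^n ≤ Real.exp s := by
    calc (1+x)^n ≤ (Real.exp x)^n := by
          apply pow_le_pow_left₀ (by positivity)
          linarith [Real.add_one_le_exp x]
    _ = Real.exp (x * n) := by rw [← Real.exp_nat_mul]; ring_nf
    _ = Real.exp s := by rw [hx]; field_simp
  have h3 : (n.choose s : ℝ) * x^s ≤ Real.exp s := h1.trans h2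
  rw [show ((n:ℝ)/s)^s * Real.exp s = Real.exp s / x^s by
    rw [hx, div_pow, div_pow]; field_simp]
  rw [le_div_iff₀ (by positivity)]
  exact h3

lemma tail_le_real {ι : Type*} [DecidableEq ι] (F : Finset ι) (k : ℕ) (pr : ℝ)
    (hp0 : 0 < pr) (hp1 : pr ≤ 1) (hμk : (F.card : ℝ) * pr ≤ k) (hk0 : 0 < k)
    (hkm : k ≤ F.card) :
    ∑ T ∈ F.powerset.filter (fun T => k ≤ T.card),
        pr ^ T.card * (1-pr) ^ (F.card - T.card)
      ≤ ((F.card : ℝ) * pr / k)^k * Real.exp ((k:ℝ) - (F.card : ℝ) * pr) := by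
  set m := F.card with hm
  set μ : ℝ := (m : ℝ) * pr with hμ
  have hmpos : 0 < m := lt_of_lt_of_le hk0 hkm
  have hμ0 : 0 < μ := by
    apply mul_pos _ hp0; exact_mod_cast hmpos
  have hkR : (0:ℝ) < k := by exact_mod_cast hk0
  set θ : ℝ := k / μ with hθ
  have hθ1 : 1 ≤ θ := (one_le_div hμ0).mpr hμk
  have hθ0 : 0 < θ := lt_of_lt_of_le one_pos hθ1
  have hq0 : 0 ≤ 1 - pr := by linarith
  have step1 : ∑ T ∈ F.powerset.filter (fun T => k ≤ T.card),
        pr ^ T.card * (1-pr) ^ (m - T.card)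
      ≤ θ⁻¹^k * ∑ T ∈ F.powerset, (pr*θ) ^ T.card * (1-pr) ^ (m - T.card) := by
    rw [Finset.mul_sum]
    have pt : ∀ T ∈ F.powerset.filter (fun T => k ≤ T.card),
        pr ^ T.card * (1-pr) ^ (m - T.card)
          ≤ θ⁻¹^k * ((pr*θ) ^ T.card * (1-pr) ^ (m - T.card)) := by
      intro T hT
      rw [Finset.mem_filter] at hT
      have hc : k ≤ T.card := hT.2
      have h1 : (1:ℝ) ≤ θ⁻¹^k * θ^T.card := by
        rw [inv_pow, inv_mul_eq_div, le_div_iff₀ (pow_pos hθ0 k), one_mul]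
        exact pow_le_pow_right₀ hθ1 hc
      calc pr ^ T.card * (1-pr) ^ (m - T.card)
          = 1 * (pr ^ T.card * (1-pr) ^ (m - T.card)) := (one_mul _).symm
      _ ≤ (θ⁻¹^k * θ^T.card) * (pr ^ T.card * (1-pr) ^ (m - T.card)) :=
          mul_le_mul_of_nonneg_right h1 (by positivity)
      _ = θ⁻¹^k * ((pr*θ) ^ T.card * (1-pr) ^ (m - T.card)) := by
          rw [mul_pow]; ring
    calc ∑ T ∈ F.powerset.filter (fun T => k ≤ T.card), pr ^ T.card * (1-pr) ^ (m - T.card)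
        ≤ ∑ T ∈ F.powerset.filter (fun T => k ≤ T.card),
            θ⁻¹^k * ((pr*θ) ^ T.card * (1-pr) ^ (m - T.card)) := Finset.sum_le_sum pt
    _ ≤ ∑ T ∈ F.powerset, θ⁻¹^k * ((pr*θ) ^ T.card * (1-pr) ^ (m - T.card)) := by
          apply Finset.sum_le_sum_of_subset_of_nonneg (Finset.filter_subset _ _)
          intro T _ _
          positivity
  have step2 : ∑ T ∈ F.powerset, (pr*θ) ^ T.card * (1-pr) ^ (m - T.card)
      = (pr*θ + (1-pr))^m := by
    rw [show (pr*θ + (1-pr))^m = ∏ _i ∈ F, (pr*θ + (1-pr)) from by rw [Finset.prod_const]]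
    rw [Finset.prod_add]
    apply Finset.sum_congr rfl
    intro T hT
    rw [Finset.mem_powerset] at hT
    rw [Finset.prod_const, Finset.prod_const, Finset.card_sdiff_of_subset hT]
  have step3 : (pr*θ + (1-pr))^m ≤ Real.exp ((k:ℝ) - μ) := by
    have hle : pr*θ + (1-pr) ≤ Real.exp (pr*(θ-1)) := by
      have := Real.add_one_le_exp (pr*(θ-1)); linarith
    have hμθ : μ * θ = k := by rw [hθ]; field_simp
    calc (pr*θ + (1-pr))^m ≤ (Real.exp (pr*(θ-1)))^m := by
          apply pow_le_pow_left₀ (by nlinarith) hle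
    _ = Real.exp ((m:ℝ) * (pr*(θ-1))) := by rw [← Real.exp_nat_mul]
    _ ≤ Real.exp ((k:ℝ) - μ) := by
          apply Real.exp_le_exp.mpr
          rw [hμ] at hμθ ⊢
          nlinarith [hμθ]
  calc ∑ T ∈ F.powerset.filter (fun T => k ≤ T.card), pr ^ T.card * (1-pr) ^ (m - T.card)
      ≤ θ⁻¹^k * ∑ T ∈ F.powerset, (pr*θ) ^ T.card * (1-pr) ^ (m - T.card) := step1
  _ = θ⁻¹^k * (pr*θ + (1-pr))^m := by rw [step2]
  _ ≤ θ⁻¹^k * Real.exp ((k:ℝ) - μ) :=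
        mul_le_mul_of_nonneg_left step3 (by positivity)
  _ = (μ/k)^k * Real.exp ((k:ℝ) - μ) := by
        congr 2
        rw [hθ, inv_div]

lemma F1aux (a lt l2 L z : ℝ) (hlt : 0 ≤ lt) (ha : 160 + 20*lt ≤ a)
    (hL : 0 ≤ L) (hz_lb : 1 - L ≤ 2*z) (hl2 : 0.6931471803 < l2) :
    lt + L + 1 + a*(1 - L - l2) - a*z ≤ -(a/20)*(1+L) := by
  have ha0 : 0 < a := by linarith
  nlinarith [mul_le_mul_of_nonneg_left hz_lb ha0.le,
    mul_nonneg (by linarith : (0:ℝ) ≤ 0.45*a - 1) hL,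
    mul_nonneg (by linarith : (0:ℝ) ≤ a) hlt]

lemma F2aux1 (a S L lN : ℝ) (ha : 160 ≤ a) (hS : 2*a + 1 < S) (hL : 0 ≤ L)
    (hlN : lN ≤ 2*(S-1)) : 2*lN + 1 + a/2 ≤ S*(a/20)*(1+L) := by
  nlinarith [mul_nonneg (mul_nonneg (by linarith : (0:ℝ) ≤ S) (by linarith : (0:ℝ) ≤ a/20)) hL,
    mul_nonneg (by linarith : (0:ℝ) ≤ S - 321) (by linarith : (0:ℝ) ≤ a - 160)]

lemma F2aux2 (a S L lN : ℝ) (ha : 160 ≤ a) (hS : 2*a ≤ S) (hlN : 0 ≤ lN)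
    (hL4 : lN/4 ≤ L) : 2*lN + 1 + a/2 ≤ S*(a/20)*(1+L) := by
  have h1 : S*(a/20)*(1+lN/4) ≤ S*(a/20)*(1+L) := by
    apply mul_le_mul_of_nonneg_left (by linarith)
    apply mul_nonneg (by linarith) (by linarith)
  have h2 : (2*a)*((a/20)*(1+lN/4)) ≤ S*((a/20)*(1+lN/4)) := by
    apply mul_le_mul_of_nonneg_right hS
    apply mul_nonneg (by linarith) (by linarith)
  nlinarith [mul_nonneg (mul_nonneg (by linarith : (0:ℝ) ≤ a) (by linarith : (0:ℝ) ≤ a - 160)) hlN]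

lemma analytic_bound (a t : ℝ) (n s k m : ℕ)
    (ht : 1 ≤ t) (ha : 160 + 20 * Real.log t ≤ a)
    (hs2 : 2*a + 1 < (s:ℝ)) (hst : (s:ℝ) * t ≤ (n:ℝ))
    (hk_lo : (s:ℝ) * a < (k:ℝ)) (hk_hi : (k:ℝ) ≤ (s:ℝ) * a + 1)
    (hm : (m:ℝ) = (s:ℝ) * ((s:ℝ)-1) / 2)
    (hn4 : t^4 ≤ (n:ℝ)) :
    ((n:ℝ)/(s:ℝ))^s * Real.exp s * (((m:ℝ)*(a*t/(n:ℝ)))/(k:ℝ))^k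
      * Real.exp ((k:ℝ) - (m:ℝ)*(a*t/(n:ℝ))) ≤ 1/(n:ℝ)^2 := by
  have hlt0 : 0 ≤ Real.log t := Real.log_nonneg ht
  have ha160 : 160 ≤ a := by linarith
  have ha0 : 0 < a := by linarith
  have ht0 : 0 < t := by linarith
  have hS0 : (0:ℝ) < s := by linarith
  have hS2 : (2:ℝ) ≤ (s:ℝ) := by linarith
  have hN0 : (0:ℝ) < n := by nlinarith
  have hK0 : (0:ℝ) < k := by nlinarith
  set N : ℝ := (n:ℝ)
  set S : ℝ := (s:ℝ)
  set K : ℝ := (k:ℝ)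
  set M : ℝ := (m:ℝ)
  set pr : ℝ := a*t/N with hpr
  have hpr0 : 0 < pr := by positivity
  have hM0 : 0 < M := by rw [hm]; nlinarith
  set z : ℝ := S*t/(2*N) with hz
  have hz0 : 0 < z := by positivity
  have hzhalf : z ≤ 1/2 := by
    rw [hz, div_le_div_iff₀ (by positivity) (by norm_num)]
    linarith
  set L : ℝ := Real.log (N/(S*t)) with hL
  have hone_le : 1 ≤ N/(S*t) := (one_le_div (by positivity)).mpr hst
  have hL0 : 0 ≤ L := Real.log_nonneg hone_le
  have hexpL : Real.exp (-L) = S*t/N := by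
    rw [hL, ← Real.log_inv, Real.exp_log (by positivity)]
    rw [inv_div]
  have h2z : 2*z = Real.exp (-L) := by rw [hexpL, hz]; field_simp
  have hlogz : Real.log z = -L - Real.log 2 := by
    have : z = (2*z)/2 := by ring
    rw [this, Real.log_div (by positivity) (by norm_num), h2z, Real.log_exp]
  have hlogNS : Real.log (N/S) = Real.log t + L := by
    have hNS : N/S = t * (N/(S*t)) := by field_simp
    rw [hNS, Real.log_mul (by positivity) (by positivity), hL]
  have hmpr : M * pr = (S-1)*a*z := by
    rw [hm, hpr, hz]; field_simp
  -- reduce to exponent comparison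
  have hLHSexp : ((N/S)^s * Real.exp s * ((M*pr)/K)^k * Real.exp (K - M*pr))
      = Real.exp (S * Real.log (N/S) + S + K * Real.log (M*pr/K) + (K - M*pr)) := by
    rw [show (N/S)^s = Real.exp (S * Real.log (N/S)) by
        rw [← Real.log_pow, Real.exp_log (by positivity)]]
    rw [show ((M*pr)/K)^k = Real.exp (K * Real.log (M*pr/K)) by
        rw [← Real.log_pow, Real.exp_log (by positivity)]]
    rw [← Real.exp_add, ← Real.exp_add, ← Real.exp_add]
  have hRHSexp : 1/N^2 = Real.exp (-(2*Real.log N)) := by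
    rw [show -(2*Real.log N) = -Real.log (N^2) by rw [Real.log_pow]; push_cast; ring]
    rw [Real.exp_neg, Real.exp_log (by positivity)]
    rw [one_div]
  rw [hLHSexp, hRHSexp, Real.exp_le_exp]
  -- main exponent bound
  have h1 : K * Real.log (M*pr/K) ≤ K * Real.log z := by
    apply mul_le_mul_of_nonneg_left _ hK0.le
    apply Real.log_le_log (by positivity)
    rw [div_le_iff₀ hK0, hmpr]
    nlinarith
  have hc1 : Real.log z ≤ 0 := Real.log_nonpos hz0.le (by linarith)
  have h2 : K + K * Real.log z ≤ S*a*(1 + Real.log z) + 1 := by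
    rcases le_or_gt 0 (1 + Real.log z) with hc | hc
    · nlinarith [mul_le_mul_of_nonneg_right hk_hi hc]
    · nlinarith [mul_le_mul_of_nonneg_right hk_lo.le (by linarith : 0 ≤ -(1+Real.log z))]
  have h3 : -(M*pr) ≤ -(S*a*z) + a/2 := by
    rw [hmpr]; nlinarith
  have F1 : Real.log t + L + 1 + a*(1 - L - Real.log 2) - a*z ≤ -(a/20)*(1+L) := by
    have hz_lb : 1 - L ≤ 2*z := by
      rw [h2z]; linarith [Real.add_one_le_exp (-L)]
    exact F1aux a (Real.log t) (Real.log 2) L z hlt0 ha hL0 hz_lb Real.log_two_gt_d9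
  have F2 : 2*Real.log N + 1 + a/2 ≤ S*(a/20)*(1+L) := by
    rcases le_or_gt N (S^2) with hcase | hcase
    · have hlogs : Real.log S ≤ S - 1 := Real.log_le_sub_one_of_pos hS0
      have hlogn : Real.log N ≤ 2*(S-1) := by
        calc Real.log N ≤ Real.log (S^2) := Real.log_le_log (by positivity) hcase
        _ = 2 * Real.log S := by rw [Real.log_pow]; push_cast; ring
        _ ≤ 2*(S-1) := by linarith
      exact F2aux1 a S L (Real.log N) ha160 hs2 hL0 hlogn
    · have hlogs : Real.log S ≤ Real.log N / 2 := by
        have : Real.log (S^2) ≤ Real.log N := Real.log_le_log (by positivity) hcase.le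
        rw [Real.log_pow] at this; push_cast at this; linarith
      have hlogt4 : Real.log t ≤ Real.log N / 4 := by
        have : Real.log (t^4) ≤ Real.log N := Real.log_le_log (by positivity) hn4
        rw [Real.log_pow] at this; push_cast at this; linarith
      have hLexp : L = Real.log N - Real.log S - Real.log t := by
        rw [hL, Real.log_div (by positivity) (by positivity),
          Real.log_mul (by positivity) (by positivity)]
        ring
      have hLlb : Real.log N / 4 ≤ L := by rw [hLexp]; linarith
      have hlogN0 : 0 ≤ Real.log N := Real.log_nonneg (by nlinarith)
      exact F2aux2 a S L (Real.log N) ha160 (by linarith) hlogN0 hLlb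
  -- assemble
  have hXa : S * Real.log (N/S) + S + K * Real.log (M*pr/K) + (K - M*pr)
      ≤ S * (Real.log t + L + 1 + a*(1 - L - Real.log 2) - a*z) + 1 + a/2 := by
    have e1 : S * Real.log (N/S) = S * (Real.log t + L) := by rw [hlogNS]
    have expand : S*(Real.log t + L + 1 + a*(1 - L - Real.log 2) - a*z) + 1 + a/2
        = S*(Real.log t + L) + S + (S*a*(1 + Real.log z) + 1) + (-(S*a*z) + a/2) := by
      rw [hlogz]; ring
    rw [expand]
    linarith [h1, h2, h3, e1]
  have hF1S : S * (Real.log t + L + 1 + a*(1 - L - Real.log 2) - a*z)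
      ≤ S * (-(a/20)*(1+L)) := mul_le_mul_of_nonneg_left F1 hS0.le
  have : S * (-(a/20)*(1+L)) = -(S*(a/20)*(1+L)) := by ring
  linarith [hXa, hF1S, F2, this]

lemma delta_aux (Δ : ℝ) (hΔ : 10^15 ≤ Δ) :
    1 ≤ (Real.log Δ)^2 ∧
    160 + 20*Real.log ((Real.log Δ)^2) ≤ Δ/((Real.log Δ)^2) := by
  have hΔ0 : (0:ℝ) < Δ := by norm_num at hΔ ⊢; linarith
  set l : ℝ := Real.log Δ with hldef
  have hl1 : 1 ≤ l := by
    rw [hldef, show (1:ℝ) = Real.log (Real.exp 1) by rw [Real.log_exp]]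
    apply Real.log_le_log (Real.exp_pos 1)
    have := Real.exp_one_lt_d9
    norm_num at hΔ ⊢
    linarith
  have hl0 : 0 ≤ l := by linarith
  constructor
  · nlinarith
  set r : ℝ := Real.sqrt (Real.sqrt Δ) with hrdef
  have hsq : Real.sqrt Δ ≥ 0 := Real.sqrt_nonneg _
  have hr2 : r^2 = Real.sqrt Δ := Real.sq_sqrt hsq
  have hr4 : r^4 = Δ := by
    have : (Real.sqrt Δ)^2 = Δ := Real.sq_sqrt hΔ0.le
    nlinarith [hr2]
  have hr5120 : (5120:ℝ) ≤ r := by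
    rw [hrdef]
    rw [show (5120:ℝ) = Real.sqrt (5120^2) by rw [Real.sqrt_sq]; norm_num]
    apply Real.sqrt_le_sqrt
    rw [show ((5120:ℝ)^2) = Real.sqrt ((5120^2)^2) by rw [Real.sqrt_sq]; norm_num]
    apply Real.sqrt_le_sqrt
    norm_num at hΔ ⊢
    linarith
  have hr0 : 0 < r := by linarith
  have hl4r : l ≤ 4*r := by
    have : l = 4 * Real.log r := by
      rw [hldef, ← hr4, Real.log_pow]; push_cast; ring
    rw [this]
    have := Real.log_le_sub_one_of_pos hr0
    linarith
  have hll : Real.log l ≤ l := by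
    have := Real.log_le_sub_one_of_pos (by linarith : (0:ℝ) < l)
    linarith
  have hlogt : Real.log (l^2) = 2 * Real.log l := by
    rw [Real.log_pow]; push_cast; ring
  rw [hlogt, le_div_iff₀ (by nlinarith)]
  have h1 : l^2 ≤ 16*r^2 := by nlinarith
  have h2 : 160 + 40*Real.log l ≤ 160 + 160*r := by nlinarith
  have h3 : (160 + 40*Real.log l) ≥ 0 := by
    have : Real.log l ≥ 0 := Real.log_nonneg hl1
    linarith
  have h4 : l^2 * (160 + 40*Real.log l) ≤ (16*r^2) * (160 + 160*r) := by
    apply mul_le_mul h1 h2 h3 (by positivity)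
  have h5 : (16*r^2) * (160 + 160*r) ≤ 5120*r^3 := by nlinarith
  have h6 : 5120*r^3 ≤ r^4 := by nlinarith
  nlinarith

lemma main_bound (Δ : ℝ) (hΔ : 10^15 ≤ Δ) (n : ℕ)
    (hn1 : Δ ≤ (n:ℝ)) (hn4 : ((Real.log Δ)^2)^4 ≤ (n:ℝ)) :
    ((gnp n (min 1 (ENNReal.ofReal (Δ / n))) (min_le_left _ _))
        {ω | ¬ ∀ S : Finset (Fin n), (S.card : ℝ) ≤ (n : ℝ) / (Real.log Δ)^2 →
          ((edgesIn ω S : ℝ) ≤ (S.card : ℝ) * Δ / (Real.log Δ)^2)}).toReal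
      ≤ 2/(n:ℝ) := by
  classical
  obtain ⟨ht, ha⟩ := delta_aux Δ hΔ
  set t : ℝ := (Real.log Δ)^2 with htdef
  set a : ℝ := Δ/t with hadef
  have hΔ0 : (0:ℝ) < Δ := by norm_num at hΔ ⊢; linarith
  have ht0 : (0:ℝ) < t := by linarith
  have ha160 : (160:ℝ) ≤ a := by
    have := Real.log_nonneg ht; linarith
  have ha0 : (0:ℝ) < a := by linarith
  have hat : a * t = Δ := div_mul_cancel₀ Δ (by linarith)
  have hN0 : (0:ℝ) < n := by linarith
  have hn0 : 0 < n := by exact_mod_cast hN0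
  set pr : ℝ := Δ/(n:ℝ) with hprdef
  have hpr0 : 0 < pr := by positivity
  have hpr1 : pr ≤ 1 := by rw [hprdef, div_le_one hN0]; exact hn1
  have hmin : min 1 (ENNReal.ofReal (Δ / n)) = ENNReal.ofReal pr :=
    min_eq_right (by rw [ENNReal.ofReal_le_one]; exact hpr1)
  set p : ENNReal := ENNReal.ofReal pr with hpdef
  have hp1 : p ≤ 1 := by rw [hpdef, ENNReal.ofReal_le_one]; exact hpr1
  rw [gnp_congr n (min_le_left _ _) hp1 hmin]
  -- definitions
  set kf : ℕ → ℕ := fun s => ⌊(s:ℝ)*Δ/t⌋₊ + 1 with hkf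
  set B : ℕ → ℝ := fun s => if kf s ≤ s.choose 2
    then (((s.choose 2 : ℝ))*pr/(kf s))^(kf s) * Real.exp (((kf s):ℝ) - (s.choose 2 : ℝ)*pr)
    else 0 with hBdef
  have hB0 : ∀ s, 0 ≤ B s := by
    intro s; rw [hBdef]; dsimp only; split
    · positivity
    · exact le_refl 0
  set 𝒮 : Finset (Finset (Fin n)) := univ.filter (fun S => (S.card:ℝ) ≤ (n:ℝ)/t) with h𝒮
  have hsub : {ω : {e : Fin n × Fin n // e.1 < e.2} → Bool |
      ¬ ∀ S : Finset (Fin n), (S.card:ℝ) ≤ (n:ℝ)/t → ((edgesIn ω S : ℝ) ≤ (S.card:ℝ)*Δ/t)}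
      ⊆ ⋃ S ∈ 𝒮, {ω | kf S.card ≤ edgesIn ω S} := by
    intro ω hω
    rw [Set.mem_setOf_eq] at hω
    push_neg at hω
    obtain ⟨S, hS1, hS2⟩ := hω
    have hmemS : S ∈ 𝒮 := by rw [h𝒮, Finset.mem_filter]; exact ⟨Finset.mem_univ _, hS1⟩
    refine Set.mem_biUnion hmemS ?_
    rw [Set.mem_setOf_eq, hkf]
    have hx0 : 0 ≤ (S.card:ℝ)*Δ/t := by positivity
    exact (Nat.floor_lt hx0).mpr hS2
  have step2 := (measure_mono (μ := gnp n p hp1) hsub).trans (measure_biUnion_finset_le 𝒮 _)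
  have perS : ∀ S ∈ 𝒮, gnp n p hp1 {ω | kf S.card ≤ edgesIn ω S}
      ≤ ENNReal.ofReal (B S.card) := by
    intro S hS
    refine (event_le p hp1 S (kf S.card)).trans ?_
    have hconv : ∀ T ∈ (edgeSet S).powerset.filter (fun T => kf S.card ≤ T.card),
        p ^ T.card * (1-p) ^ ((edgeSet S).card - T.card)
        = ENNReal.ofReal (pr ^ T.card * (1-pr) ^ ((edgeSet S).card - T.card)) := by
      intro T _
      have hq : (1:ENNReal) - p = ENNReal.ofReal (1-pr) := by
        rw [hpdef, ← ENNReal.ofReal_one, ← ENNReal.ofReal_sub _ hpr0.le]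
      rw [hq, hpdef, ← ENNReal.ofReal_pow hpr0.le,
        ← ENNReal.ofReal_pow (by linarith : (0:ℝ) ≤ 1-pr),
        ← ENNReal.ofReal_mul (pow_nonneg hpr0.le _)]
    rw [Finset.sum_congr rfl hconv,
      ← ENNReal.ofReal_sum_of_nonneg (fun T _ =>
        mul_nonneg (pow_nonneg hpr0.le _) (pow_nonneg (by linarith) _))]
    apply ENNReal.ofReal_le_ofReal
    rw [h𝒮, Finset.mem_filter] at hS
    have hst : (S.card:ℝ) * t ≤ n := by
      have h := hS.2
      rw [le_div_iff₀ ht0] at h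
      exact h
    by_cases hkm : kf S.card ≤ S.card.choose 2
    · have hec := edgeSet_card S
      have hcast2 : ((S.card.choose 2 : ℕ):ℝ) = (S.card:ℝ)*((S.card:ℝ)-1)/2 :=
        Nat.cast_choose_two ℝ (S.card)
      have hklo : (S.card:ℝ)*Δ/t < (kf S.card : ℝ) := by
        rw [hkf]; push_cast
        exact Nat.lt_floor_add_one _
      have hμk : ((edgeSet S).card:ℝ) * pr ≤ (kf S.card : ℝ) := by
        rw [hec, hcast2, hprdef]
        have key : (S.card:ℝ)*((S.card:ℝ)-1)/2 * (Δ/(n:ℝ)) ≤ (S.card:ℝ)*Δ/t := by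
          rw [div_mul_div_comm, div_le_div_iff₀ (by positivity) ht0]
          have hc0 : (0:ℝ) ≤ (S.card:ℝ) := Nat.cast_nonneg _
          nlinarith [mul_le_mul_of_nonneg_left
            (show ((S.card:ℝ)-1)*t ≤ 2*(n:ℝ) by nlinarith)
            (mul_nonneg hc0 hΔ0.le)]
        linarith
      have htail := tail_le_real (edgeSet S) (kf S.card) pr hpr0 hpr1 hμk
        (Nat.succ_pos _) (by rw [hec]; exact hkm)
      rw [hBdef]; dsimp only; rw [if_pos hkm, ← hec]
      exact htail
    · rw [hBdef]; dsimp only; rw [if_neg hkm]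
      have hempty : (edgeSet S).powerset.filter (fun T => kf S.card ≤ T.card) = ∅ := by
        rw [Finset.filter_eq_empty_iff]
        intro T hT
        rw [Finset.mem_powerset] at hT
        have h1 := Finset.card_le_card hT
        rw [edgeSet_card] at h1
        omega
      rw [hempty, Finset.sum_empty]
  have step5 : ∑ S ∈ 𝒮, B S.card ≤ 2/(n:ℝ) := by
    rw [Finset.sum_comp]
    have hperfiber : ∀ s ∈ 𝒮.image Finset.card,
        ((𝒮.filter (fun S => S.card = s)).card) • B s ≤ 1/(n:ℝ)^2 := by
      intro s hs
      obtain ⟨S, hS𝒮, hScard⟩ := Finset.mem_image.mp hs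
      have hfibsub : 𝒮.filter (fun S' => S'.card = s) ⊆ Finset.univ.powersetCard s := by
        intro S' hS'
        rw [Finset.mem_filter] at hS'
        rw [Finset.mem_powersetCard_univ]
        exact hS'.2
      have hfib : ((𝒮.filter (fun S' => S'.card = s)).card : ℝ) ≤ (n.choose s : ℝ) := by
        have h1 := Finset.card_le_card hfibsub
        rw [Finset.card_powersetCard, Finset.card_fin] at h1
        exact_mod_cast h1
      have hsmul : ((𝒮.filter (fun S' => S'.card = s)).card) • B s
          = ((𝒮.filter (fun S' => S'.card = s)).card : ℝ) * B s := by
        rw [nsmul_eq_mul]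
      rw [hsmul]
      have hchooseB : ((𝒮.filter (fun S' => S'.card = s)).card : ℝ) * B s
          ≤ (n.choose s : ℝ) * B s := mul_le_mul_of_nonneg_right hfib (hB0 s)
      refine hchooseB.trans ?_
      -- now the per-s bound
      rw [h𝒮, Finset.mem_filter] at hS𝒮
      have hst : (s:ℝ) * t ≤ n := by
        have h := hS𝒮.2
        rw [le_div_iff₀ ht0] at h
        rw [← hScard]
        exact h
      by_cases hkm : kf s ≤ s.choose 2
      · have hs0 : 0 < s := by
          rcases Nat.eq_zero_or_pos s with h | h
          · exfalso; rw [h] at hkm; simp [hkf] at hkm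
          · exact h
        have hS0 : (0:ℝ) < s := by exact_mod_cast hs0
        have hcast2 : ((s.choose 2 : ℕ):ℝ) = (s:ℝ)*((s:ℝ)-1)/2 := Nat.cast_choose_two ℝ s
        have hklo : (s:ℝ)*a < (kf s : ℝ) := by
          rw [hkf, hadef]; push_cast
          calc (s:ℝ)*(Δ/t) = (s:ℝ)*Δ/t := by ring
          _ < _ := Nat.lt_floor_add_one _
        have hkhi : (kf s : ℝ) ≤ (s:ℝ)*a + 1 := by
          rw [hkf, hadef]; push_cast
          have := Nat.floor_le (show (0:ℝ) ≤ (s:ℝ)*Δ/t by positivity)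
          calc (⌊(s:ℝ)*Δ/t⌋₊ : ℝ) + 1 ≤ (s:ℝ)*Δ/t + 1 := by linarith
          _ = (s:ℝ)*(Δ/t) + 1 := by ring
        have hchoosele : ((kf s : ℕ):ℝ) ≤ (s:ℝ)*((s:ℝ)-1)/2 := by
          rw [← hcast2]; exact_mod_cast hkm
        have hs2 : 2*a + 1 < (s:ℝ) := by nlinarith
        have hsn : s ≤ n := by
          have : (s:ℝ) ≤ (n:ℝ) := by nlinarith
          exact_mod_cast this
        have hprat : a*t/(n:ℝ) = pr := by rw [hat]
        have hAB := analytic_bound a t n s (kf s) (s.choose 2) ht ha hs2 hst hklo hkhi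
          (by exact_mod_cast hcast2) hn4
        rw [hprat] at hAB
        have hCL := choose_le_real n s hs0 hsn
        rw [hBdef]; dsimp only; rw [if_pos hkm]
        calc _ ≤ (((n:ℝ)/s)^s * Real.exp s) * ((((s.choose 2:ℕ):ℝ)*pr/((kf s:ℕ):ℝ))^(kf s)
              * Real.exp (((kf s:ℕ):ℝ) - ((s.choose 2:ℕ):ℝ)*pr)) :=
              mul_le_mul_of_nonneg_right hCL (by positivity)
        _ = ((n:ℝ)/s)^s * Real.exp s * ((((s.choose 2:ℕ):ℝ)*pr)/((kf s:ℕ):ℝ))^(kf s)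
              * Real.exp (((kf s:ℕ):ℝ) - ((s.choose 2:ℕ):ℝ)*pr) := by ring
        _ ≤ 1/(n:ℝ)^2 := hAB
      · rw [hBdef]; dsimp only; rw [if_neg hkm]
        rw [mul_zero]
        positivity
    calc ∑ s ∈ 𝒮.image Finset.card, ((𝒮.filter (fun S => S.card = s)).card) • B s
        ≤ ∑ s ∈ 𝒮.image Finset.card, 1/(n:ℝ)^2 := Finset.sum_le_sum hperfiber
    _ = ((𝒮.image Finset.card).card : ℝ) * (1/(n:ℝ)^2) := by
        rw [Finset.sum_const, nsmul_eq_mul]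
    _ ≤ ((n:ℝ)+1) * (1/(n:ℝ)^2) := by
        apply mul_le_mul_of_nonneg_right _ (by positivity)
        have hsub2 : 𝒮.image Finset.card ⊆ Finset.range (n+1) := by
          intro s hs
          obtain ⟨S, _, hScard⟩ := Finset.mem_image.mp hs
          rw [Finset.mem_range]
          have := Finset.card_le_univ S
          rw [Fintype.card_fin] at this
          omega
        have := Finset.card_le_card hsub2
        rw [Finset.card_range] at this
        exact_mod_cast this
    _ ≤ 2/(n:ℝ) := by
        rw [mul_one_div, div_le_div_iff₀ (by positivity) hN0]
        have hN1 : (1:ℝ) ≤ (n:ℝ) := by linarith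
        nlinarith
  have hfinal : gnp n p hp1 {ω : {e : Fin n × Fin n // e.1 < e.2} → Bool |
      ¬ ∀ S : Finset (Fin n), (S.card:ℝ) ≤ (n:ℝ)/t → ((edgesIn ω S : ℝ) ≤ (S.card:ℝ)*Δ/t)}
      ≤ ENNReal.ofReal (2/(n:ℝ)) := by
    refine step2.trans ?_
    calc ∑ S ∈ 𝒮, gnp n p hp1 {ω | kf S.card ≤ edgesIn ω S}
        ≤ ∑ S ∈ 𝒮, ENNReal.ofReal (B S.card) := Finset.sum_le_sum perS
    _ = ENNReal.ofReal (∑ S ∈ 𝒮, B S.card) :=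
        (ENNReal.ofReal_sum_of_nonneg (fun S _ => hB0 S.card)).symm
    _ ≤ ENNReal.ofReal (2/(n:ℝ)) := ENNReal.ofReal_le_ofReal step5
  exact ENNReal.toReal_le_of_le_ofReal (by positivity) hfinal


/-- In `G(n,p)` with `p = Δ/n` for a sufficiently large constant `Δ`, with probability
`1 - o(n^{-1/2})` every vertex subset `S` with `|S| ≤ n / (log Δ)²` spans at most
`|S| · Δ / (log Δ)²` edges. -/
theorem gnp_sparse_subsets :
    ∃ Δ₀ : ℝ, ∀ Δ : ℝ, Δ₀ ≤ Δ →
      (fun n : ℕ =>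
          ((gnp n (min 1 (ENNReal.ofReal (Δ / n))) (min_le_left _ _))
            {ω | ¬ ∀ S : Finset (Fin n), (S.card : ℝ) ≤ (n : ℝ) / (Real.log Δ)^2 →
              ((edgesIn ω S : ℝ) ≤ (S.card : ℝ) * Δ / (Real.log Δ)^2)}).toReal)
        =o[Filter.atTop] fun n : ℕ => (n : ℝ) ^ (-(1 : ℝ)/2) := by
  refine ⟨10^15, fun Δ hΔ => ?_⟩
  have hev : ∀ᶠ n : ℕ in Filter.atTop,
      ((gnp n (min 1 (ENNReal.ofReal (Δ / n))) (min_le_left _ _))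
        {ω | ¬ ∀ S : Finset (Fin n), (S.card : ℝ) ≤ (n : ℝ) / (Real.log Δ)^2 →
          ((edgesIn ω S : ℝ) ≤ (S.card : ℝ) * Δ / (Real.log Δ)^2)}).toReal ≤ 2/(n:ℝ) := by
    filter_upwards [tendsto_natCast_atTop_atTop.eventually_ge_atTop Δ,
      tendsto_natCast_atTop_atTop.eventually_ge_atTop (((Real.log Δ)^2)^4)] with n h1 h2
    exact main_bound Δ hΔ n h1 h2
  have hO : (fun n : ℕ =>
      ((gnp n (min 1 (ENNReal.ofReal (Δ / n))) (min_le_left _ _))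
        {ω | ¬ ∀ S : Finset (Fin n), (S.card : ℝ) ≤ (n : ℝ) / (Real.log Δ)^2 →
          ((edgesIn ω S : ℝ) ≤ (S.card : ℝ) * Δ / (Real.log Δ)^2)}).toReal)
      =O[Filter.atTop] (fun n : ℕ => 2/(n:ℝ)) := by
    rw [Asymptotics.isBigO_iff]
    refine ⟨1, ?_⟩
    filter_upwards [hev, Filter.eventually_ge_atTop 1] with n hn hn1
    have hxpos : (0:ℝ) < n := by exact_mod_cast hn1
    rw [Real.norm_eq_abs, Real.norm_eq_abs, one_mul,
      abs_of_nonneg ENNReal.toReal_nonneg, abs_of_nonneg (by positivity)]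
    exact hn
  refine hO.trans_isLittleO ?_
  rw [Asymptotics.isLittleO_iff]
  intro c hc
  filter_upwards [tendsto_natCast_atTop_atTop.eventually_ge_atTop ((2/c)^2),
    Filter.eventually_ge_atTop 1] with n h1 hn1
  have hxpos : (0:ℝ) < n := by
    have : (1:ℝ) ≤ n := by exact_mod_cast hn1
    linarith
  have hrw : (n:ℝ) ^ (-(1:ℝ)/2) = (Real.sqrt n)⁻¹ := by
    rw [show (-(1:ℝ)/2) = -(1/2) by norm_num, Real.rpow_neg (le_of_lt hxpos),
      ← Real.sqrt_eq_rpow]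
  rw [hrw, Real.norm_eq_abs, Real.norm_eq_abs,
    abs_of_nonneg (by positivity), abs_of_nonneg (by positivity)]
  have hsq : 2/c ≤ Real.sqrt n := by
    have h2c : (0:ℝ) ≤ 2/c := by positivity
    calc 2/c = Real.sqrt ((2/c)^2) := (Real.sqrt_sq h2c).symm
    _ ≤ Real.sqrt n := Real.sqrt_le_sqrt h1
  have hsqpos : 0 < Real.sqrt n := Real.sqrt_pos.mpr hxpos
  rw [div_le_iff₀ hxpos]
  have h2cs : 2 ≤ c * Real.sqrt n := by
    rw [div_le_iff₀ hc] at hsq; nlinarith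
  have key : (Real.sqrt n)⁻¹ * (n:ℝ) = Real.sqrt n := by
    rw [inv_mul_eq_div, Real.div_sqrt]
  calc (2:ℝ) ≤ c * Real.sqrt n := h2cs
  _ = c * ((Real.sqrt n)⁻¹ * (n:ℝ)) := by rw [key]
  _ = c * (Real.sqrt n)⁻¹ * (n:ℝ) := by ring
end

section
/- In G(n,p) with p = Δ/n and Δ a sufficiently large constant, with probability 1 - o(n^{-1/2}) the minimum size α₁ of a maximal independent set satisfies α₁(G(n,p)) ≥ (log Δ - 3 log log Δ)·n/Δ. -/
open MeasureTheory

/-- The adjacency relation of the sample `ω`. -/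
def adjOf {n : ℕ} (ω : {e : Fin n × Fin n // e.1 < e.2} → Bool) (u v : Fin n) : Prop :=
  (∃ h : u < v, ω ⟨(u, v), h⟩ = true) ∨ (∃ h : v < u, ω ⟨(v, u), h⟩ = true)

section aux
open Real Set Filter Asymptotics

abbrev Edg (n : ℕ) := {e : Fin n × Fin n // e.1 < e.2}

variable {n : ℕ} {p : ENNReal} (hp : p ≤ 1)

def edg {n : ℕ} (u v : Fin n) (h : u ≠ v) : Edg n :=
  if huv : u < v then ⟨(u, v), huv⟩ else ⟨(v, u), lt_of_le_of_ne (not_lt.mp huv) (Ne.symm h)⟩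

lemma adjOf_iff {ω : Edg n → Bool} {u v : Fin n} (h : u ≠ v) :
    adjOf ω u v ↔ ω (edg u v h) = true := by
  unfold adjOf edg
  rcases lt_or_gt_of_ne h with hlt | hgt
  · simp [hlt, not_lt_of_gt hlt]
  · have : ¬ u < v := not_lt_of_gt hgt
    simp [this, hgt]

lemma edg_inj {u u' v : Fin n} (h : u ≠ v) (h' : u' ≠ v) (he : edg u v h = edg u' v h') :
    u = u' := by
  unfold edg at he
  split at he <;> split at he <;>
    simp only [Subtype.mk.injEq, Prod.mk.injEq] at he
  · exact he.1
  · exact absurd he.1 h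
  · exact absurd he.2 h
  · exact he.2

section cv
variable (I : Finset (Fin n)) (v : Fin n) (hv : v ∉ I)

noncomputable def Cv : Finset (Edg n) :=
  I.attach.image (fun u => edg u.1 v (fun h => hv (h ▸ u.2)))

lemma Cv_card : (Cv I v hv).card = I.card := by
  rw [Cv, Finset.card_image_of_injective, Finset.card_attach]
  intro a b hab
  exact Subtype.ext (edg_inj _ _ hab)

lemma notDom_eq :
    {ω : Edg n → Bool | ∀ u ∈ I, ¬ adjOf ω u v} = {ω | ∀ e ∈ Cv I v hv, ω e = false} := by
  ext ω
  simp only [Set.mem_setOf_eq, Cv, Finset.mem_image, Finset.mem_attach]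
  constructor
  · rintro h e ⟨u, -, rfl⟩
    have := h u.1 u.2
    rw [adjOf_iff (show u.1 ≠ v from fun hh => hv (hh ▸ u.2))] at this
    simpa using this
  · intro h u hu hadj
    rw [adjOf_iff (fun hh : u = v => hv (hh ▸ hu))] at hadj
    have := h _ ⟨⟨u, hu⟩, trivial, rfl⟩
    simp [this] at hadj
end cv

lemma edg_touch {u v : Fin n} (h : u ≠ v) :
    (edg u v h).1.1 = v ∨ (edg u v h).1.2 = v := by
  unfold edg; split <;> simp


lemma gnp_allFalse (S : Finset (Edg n)) :
    gnp n p hp {ω | ∀ e ∈ S, ω e = false} = (1 - p) ^ S.card := by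
  classical
  have hset : {ω : Edg n → Bool | ∀ e ∈ S, ω e = false} =
      Set.pi Set.univ (fun e => if e ∈ S then ({false} : Set Bool) else Set.univ) := by
    ext ω
    simp only [Set.mem_setOf_eq, Set.mem_pi, Set.mem_univ, forall_true_left]
    constructor
    · intro h e; split <;> simp_all
    · intro h e he; have := h e; simp [he] at this; exact this
  rw [hset]
  unfold gnp
  rw [Measure.pi_pi]
  have hb : ((PMF.bernoulli p.toNNReal (by simpa using ENNReal.toNNReal_mono ENNReal.one_ne_top hp)).toMeasure) {false} = 1 - p := by
    rw [PMF.toMeasure_apply_singleton _ _ (measurableSet_singleton _)]; exact (PMF.bernoulli_apply _ false).trans (by simp [ENNReal.coe_sub, ENNReal.coe_toNNReal (ne_top_of_le_ne_top ENNReal.one_ne_top hp)])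
  calc ∏ e : Edg n, (PMF.bernoulli p.toNNReal (by simpa using ENNReal.toNNReal_mono ENNReal.one_ne_top hp)).toMeasure (if e ∈ S then ({false} : Set Bool) else Set.univ)
      = ∏ e : Edg n, (if e ∈ S then (1 - p) else 1) := by
        refine Finset.prod_congr rfl fun e _ => ?_
        split
        · exact hb
        · exact measure_univ
    _ = (1 - p) ^ S.card := by
        rw [Finset.prod_ite, Finset.prod_const, Finset.prod_const, one_pow, mul_one,
          Finset.filter_univ_mem]

lemma edg_ends {u v : Fin n} (h : u ≠ v) :
    ((edg u v h).1.1 = u ∧ (edg u v h).1.2 = v) ∨ ((edg u v h).1.1 = v ∧ (edg u v h).1.2 = u) := by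
  unfold edg; split <;> simp

lemma meas_of_finite {α : Type*} [MeasurableSpace α] [MeasurableSingletonClass α] [Finite α]
    (s : Set α) : MeasurableSet s := s.to_countable.measurableSet

lemma pi_indep {ι : Type*} [Fintype ι] {m : ι → Measure Bool} [∀ i, IsProbabilityMeasure (m i)]
    (P : ι → Prop) [DecidablePred P] (A B : Set (ι → Bool))
    (hA : ∀ ω ω' : ι → Bool, (∀ i, P i → ω i = ω' i) → ω ∈ A → ω' ∈ A)
    (hB : ∀ ω ω' : ι → Bool, (∀ i, ¬ P i → ω i = ω' i) → ω ∈ B → ω' ∈ B) :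
    Measure.pi m (A ∩ B) = Measure.pi m A * Measure.pi m B := by
  set e := MeasurableEquiv.piEquivPiSubtypeProd (fun _ : ι => Bool) P with he
  have hmp := measurePreserving_piEquivPiSubtypeProd m P
  set ν := (Measure.pi fun i : Subtype P => m i).prod
      (Measure.pi fun i : {i // ¬ P i} => m i) with hν
  have key : ∀ s : Set _, Measure.pi m (e ⁻¹' s) = ν s := by
    intro s
    rw [← hmp.map_eq, MeasurableEquiv.map_apply]
  have hAeq : A = e ⁻¹' ((Prod.fst '' (e '' A)) ×ˢ univ) := by
    ext ω
    constructor
    · intro hω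
      exact ⟨⟨e ω, Set.mem_image_of_mem _ hω, rfl⟩, trivial⟩
    · rintro ⟨⟨z, ⟨ω', hω', rfl⟩, hz⟩, -⟩
      exact hA ω' ω (fun i hi => congrFun hz ⟨i, hi⟩) hω'
  have hBeq : B = e ⁻¹' (univ ×ˢ (Prod.snd '' (e '' B))) := by
    ext ω
    constructor
    · intro hω
      exact ⟨trivial, ⟨e ω, Set.mem_image_of_mem _ hω, rfl⟩⟩
    · rintro ⟨-, ⟨z, ⟨ω', hω', rfl⟩, hz⟩⟩
      exact hB ω' ω (fun i hi => congrFun hz ⟨i, hi⟩) hω'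
  have hprod : ∀ (s : Set ((i : Subtype P) → Bool)) (t : Set ((i : {i // ¬ P i}) → Bool)),
      ν (s ×ˢ t) = (Measure.pi fun i : Subtype P => m i) s *
        (Measure.pi fun i : {i // ¬ P i} => m i) t := fun s t => Measure.prod_prod s t
  have h1 : Measure.pi m A = (Measure.pi fun i : Subtype P => m i) (Prod.fst '' (e '' A)) := by
    conv_lhs => rw [hAeq]
    rw [key, hprod]; simp
  have h2 : Measure.pi m B = (Measure.pi fun i : {i // ¬ P i} => m i) (Prod.snd '' (e '' B)) := by
    conv_lhs => rw [hBeq]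
    rw [key, hprod]; simp
  have hABeq : A ∩ B = e ⁻¹' ((Prod.fst '' (e '' A)) ×ˢ (Prod.snd '' (e '' B))) := by
    conv_lhs => rw [hAeq, hBeq]
    rw [← Set.preimage_inter, Set.prod_inter_prod, Set.univ_inter, Set.inter_univ]
  rw [hABeq, key, hprod, h1, h2]

instance : IsProbabilityMeasure (gnp n p hp) := by unfold gnp; infer_instance

lemma gnp_dom_single (I : Finset (Fin n)) (v : Fin n) (hv : v ∉ I) :
    gnp n p hp {ω | ∃ u ∈ I, adjOf ω u v} = 1 - (1 - p) ^ I.card := by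
  have hc : {ω : Edg n → Bool | ∃ u ∈ I, adjOf ω u v} =
      {ω : Edg n → Bool | ∀ u ∈ I, ¬ adjOf ω u v}ᶜ := by
    ext ω; simp [Set.mem_compl_iff]
  rw [hc, prob_compl_eq_one_sub (meas_of_finite _), notDom_eq I v hv,
    gnp_allFalse hp, Cv_card]

lemma gnp_dom (I : Finset (Fin n)) (T : Finset (Fin n)) (hdisj : ∀ v ∈ T, v ∉ I) :
    gnp n p hp {ω | ∀ v ∈ T, ∃ u ∈ I, adjOf ω u v} =
      (1 - (1 - p) ^ I.card) ^ T.card := by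
  classical
  induction T using Finset.induction_on with
  | empty => simp
  | @insert v T hvT ih =>
    have hvI : v ∉ I := hdisj v (Finset.mem_insert_self _ _)
    have hsplit : {ω : Edg n → Bool | ∀ w ∈ insert v T, ∃ u ∈ I, adjOf ω u w} =
        {ω | ∃ u ∈ I, adjOf ω u v} ∩ {ω | ∀ w ∈ T, ∃ u ∈ I, adjOf ω u w} := by
      ext ω; simp [Finset.forall_mem_insert]
    rw [hsplit]
    show Measure.pi _ _ = _
    rw [pi_indep (fun e : Edg n => e.1.1 = v ∨ e.1.2 = v)]
    · show gnp n p hp _ * gnp n p hp _ = _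
      rw [gnp_dom_single hp I v hvI, ih (fun w hw => hdisj w (Finset.mem_insert_of_mem hw)),
        Finset.card_insert_of_notMem hvT, pow_succ]
      ring
    · rintro ω ω' hag ⟨u, hu, hadj⟩
      have huv : u ≠ v := fun h => hvI (h ▸ hu)
      refine ⟨u, hu, ?_⟩
      rw [adjOf_iff huv] at hadj ⊢
      rw [← hag _ (edg_touch huv)]
      exact hadj
    · intro ω ω' hag hω w hw
      obtain ⟨u, hu, hadj⟩ := hω w hw
      have huw : u ≠ w := fun h => hdisj w (Finset.mem_insert_of_mem hw) (h ▸ hu)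
      refine ⟨u, hu, ?_⟩
      rw [adjOf_iff huw] at hadj ⊢
      rw [← hag _ ?_]
      · exact hadj
      · rintro (h1 | h2)
        · rcases edg_ends huw with ⟨ha, hb⟩ | ⟨ha, hb⟩
          · exact hvI ((ha.symm.trans h1) ▸ hu)
          · exact hvT ((ha.symm.trans h1) ▸ hw)
        · rcases edg_ends huw with ⟨ha, hb⟩ | ⟨ha, hb⟩
          · exact hvT ((hb.symm.trans h2) ▸ hw)
          · exact hvI ((hb.symm.trans h2) ▸ hu)

lemma gnp_bad_le (b : ℝ) (K : ℕ) (hK : K ≤ n) (hb : ∀ m : ℕ, (m : ℝ) < b → m ≤ K) :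
    gnp n p hp {ω | ¬ ∀ I : Finset (Fin n),
        ((∀ u ∈ I, ∀ v ∈ I, ¬ adjOf ω u v) ∧
         (∀ v : Fin n, v ∉ I → ∃ u ∈ I, adjOf ω u v)) → b ≤ (I.card : ℝ)}
      ≤ (n.choose K : ENNReal) * (1 - (1 - p) ^ K) ^ (n - K) := by
  classical
  have hsub : {ω : Edg n → Bool | ¬ ∀ I : Finset (Fin n),
        ((∀ u ∈ I, ∀ v ∈ I, ¬ adjOf ω u v) ∧
         (∀ v : Fin n, v ∉ I → ∃ u ∈ I, adjOf ω u v)) → b ≤ (I.card : ℝ)} ⊆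
      ⋃ J ∈ Finset.powersetCard K (Finset.univ : Finset (Fin n)),
        {ω | ∀ v ∈ Finset.univ \ J, ∃ u ∈ J, adjOf ω u v} := by
    intro ω hω
    simp only [Set.mem_setOf_eq, not_forall] at hω
    obtain ⟨I, hI, hcard⟩ := hω
    push_neg at hcard
    have hIK : I.card ≤ K := hb _ hcard
    obtain ⟨J, hIJ, hJu, hJcard⟩ := Finset.exists_subsuperset_card_eq
      (Finset.subset_univ I) hIK (by simpa using hK)
    simp only [Set.mem_iUnion, exists_prop]
    refine ⟨J, Finset.mem_powersetCard.mpr ⟨hJu, hJcard⟩, ?_⟩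
    intro v hv
    have hvJ : v ∉ J := (Finset.mem_sdiff.mp hv).2
    have hvI : v ∉ I := fun h => hvJ (hIJ h)
    obtain ⟨u, hu, hadj⟩ := hI.2 v hvI
    exact ⟨u, hIJ hu, hadj⟩
  refine le_trans (measure_mono hsub) ?_
  refine le_trans (measure_biUnion_finset_le _ _) ?_
  have heach : ∀ J ∈ Finset.powersetCard K (Finset.univ : Finset (Fin n)),
      gnp n p hp {ω | ∀ v ∈ Finset.univ \ J, ∃ u ∈ J, adjOf ω u v} =
        (1 - (1 - p) ^ K) ^ (n - K) := by
    intro J hJ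
    obtain ⟨hJu, hJcard⟩ := Finset.mem_powersetCard.mp hJ
    rw [gnp_dom hp J _ (fun v hv => (Finset.mem_sdiff.mp hv).2), hJcard,
      Finset.card_sdiff_of_subset hJu]
    simp [hJcard]
  rw [Finset.sum_congr rfl heach, Finset.sum_const, Finset.card_powersetCard]
  simp [nsmul_eq_mul]

lemma gnp_bad_toReal_le (x b : ℝ) (K : ℕ) (hx0 : 0 ≤ x) (hx1 : x ≤ 1) (hK : K ≤ n)
    (hb : ∀ m : ℕ, (m : ℝ) < b → m ≤ K) :
    ((gnp n (min 1 (ENNReal.ofReal x)) (min_le_left _ _)) {ω | ¬ ∀ I : Finset (Fin n),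
        ((∀ u ∈ I, ∀ v ∈ I, ¬ adjOf ω u v) ∧
         (∀ v : Fin n, v ∉ I → ∃ u ∈ I, adjOf ω u v)) → b ≤ (I.card : ℝ)}).toReal
      ≤ (n.choose K : ℝ) * (1 - (1 - x) ^ K) ^ (n - K) := by
  have hpe : min 1 (ENNReal.ofReal x) = ENNReal.ofReal x := by
    rw [min_eq_right (ENNReal.ofReal_le_one.mpr hx1)]
  have h1x0 : (0:ℝ) ≤ 1 - x := by linarith
  have hy1 : (1 - x) ^ K ≤ 1 := pow_le_one₀ h1x0 (by linarith)
  have hy0 : (0:ℝ) ≤ (1 - x) ^ K := pow_nonneg h1x0 K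
  have key : (1 : ENNReal) - (1 - ENNReal.ofReal x) ^ K =
      ENNReal.ofReal (1 - (1 - x) ^ K) := by
    rw [show (1 : ENNReal) - ENNReal.ofReal x = ENNReal.ofReal (1 - x) by
        rw [ENNReal.ofReal_sub _ hx0, ENNReal.ofReal_one],
      ← ENNReal.ofReal_pow h1x0,
      show (1 : ENNReal) = ENNReal.ofReal 1 from ENNReal.ofReal_one.symm,
      ← ENNReal.ofReal_sub _ hy0]
  refine ENNReal.toReal_le_of_le_ofReal
    (mul_nonneg (Nat.cast_nonneg _) (pow_nonneg (by linarith) _)) ?_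
  refine le_trans (gnp_bad_le (min_le_left _ _) b K hK hb) ?_
  rw [hpe, key, ← ENNReal.ofReal_pow (by linarith), ← ENNReal.ofReal_natCast,
    ← ENNReal.ofReal_mul (by positivity)]

lemma sq_div_four_le_exp {x : ℝ} (hx : 0 ≤ x) : x ^ 2 / 4 ≤ Real.exp x := by
  have h1 : Real.exp x = Real.exp (x/2) ^ 2 := by
    rw [← Real.exp_nat_mul]; norm_num; rw [show (2:ℝ) * (x/2) = x by ring]
  have h2 : x / 2 ≤ Real.exp (x/2) := by
    nlinarith [Real.add_one_le_exp (x/2)]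
  nlinarith [Real.exp_pos (x/2)]

lemma pow_self_le_factorial_mul_exp (K : ℕ) : (K : ℝ) ^ K ≤ (K.factorial : ℝ) * Real.exp K := by
  induction K with
  | zero => simp
  | succ k ih =>
    have hk : (0:ℝ) ≤ k := Nat.cast_nonneg k
    have key : ((k:ℝ) + 1) ^ (k+1) ≤ ((k:ℝ)+1) * ((k:ℝ)^k * Real.exp 1) := by
      have h1 : ((k:ℝ) + 1) ^ k ≤ (k:ℝ)^k * Real.exp 1 := by
        rcases Nat.eq_zero_or_pos k with rfl | hkpos
        · simpa using Real.one_le_exp (by norm_num)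
        · have hkp : (0:ℝ) < k := by exact_mod_cast hkpos
          have h2 : (1 + 1/(k:ℝ)) ≤ Real.exp (1/(k:ℝ)) := by
            have := Real.add_one_le_exp (1/(k:ℝ)); linarith
          have h3 : ((k:ℝ)+1)^k = (k:ℝ)^k * (1 + 1/(k:ℝ))^k := by
            rw [← mul_pow]; congr 1; field_simp
          rw [h3]
          have h4 : (1 + 1/(k:ℝ))^k ≤ Real.exp (1/(k:ℝ)) ^ k :=
            pow_le_pow_left₀ (by positivity) h2 k
          have h5 : Real.exp (1/(k:ℝ)) ^ k = Real.exp (k * (1/(k:ℝ))) := by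
            rw [← Real.exp_nat_mul]
          have h6 : (k:ℝ) * (1/(k:ℝ)) = 1 := by field_simp
          calc (k:ℝ)^k * (1 + 1/(k:ℝ))^k ≤ (k:ℝ)^k * Real.exp (1/(k:ℝ)) ^ k := by
                exact mul_le_mul_of_nonneg_left h4 (by positivity)
            _ = (k:ℝ)^k * Real.exp 1 := by rw [h5, h6]
      calc ((k:ℝ) + 1) ^ (k+1) = ((k:ℝ)+1) * ((k:ℝ)+1)^k := by ring
        _ ≤ ((k:ℝ)+1) * ((k:ℝ)^k * Real.exp 1) := by
            exact mul_le_mul_of_nonneg_left h1 (by positivity)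
    have : ((k:ℝ)+1) * ((k:ℝ)^k * Real.exp 1) ≤ ((k:ℝ)+1) * ((k.factorial : ℝ) * Real.exp k * Real.exp 1) := by
      have h7 := mul_le_mul_of_nonneg_right ih (le_of_lt (Real.exp_pos 1))
      have h8 : (0:ℝ) ≤ (k:ℝ) + 1 := by positivity
      nlinarith [Real.exp_pos (1:ℝ), Real.exp_pos ((k:ℝ)), h7]
    calc ((k+1 : ℕ) : ℝ) ^ (k+1) = ((k:ℝ)+1)^(k+1) := by push_cast; ring_nf
      _ ≤ ((k:ℝ)+1) * ((k.factorial : ℝ) * Real.exp k * Real.exp 1) := le_trans key this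
      _ = ((k+1).factorial : ℝ) * Real.exp ((k:ℝ)+1) := by
          rw [Nat.factorial_succ, Real.exp_add]; push_cast; ring
      _ = ((k+1).factorial : ℝ) * Real.exp ((k+1 : ℕ) : ℝ) := by push_cast; ring_nf

lemma choose_le_epow (n K : ℕ) (hK : 1 ≤ K) :
    (n.choose K : ℝ) ≤ (Real.exp 1 * n / K) ^ K := by
  have h1 : (n.choose K : ℝ) ≤ (n:ℝ)^K / K.factorial := Nat.choose_le_pow_div K n
  have hKpos : (0:ℝ) < K := by exact_mod_cast hK
  have h2 := pow_self_le_factorial_mul_exp K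
  have hfac : (0:ℝ) < K.factorial := by exact_mod_cast K.factorial_pos
  have heK : Real.exp (K:ℝ) = Real.exp 1 ^ K := by
    rw [← Real.exp_nat_mul]; ring_nf
  rw [div_pow, mul_pow, le_div_iff₀ (by positivity)]
  calc (n.choose K : ℝ) * (K:ℝ)^K ≤ ((n:ℝ)^K / K.factorial) * (K:ℝ)^K :=
        mul_le_mul_of_nonneg_right h1 (by positivity)
    _ ≤ ((n:ℝ)^K / K.factorial) * ((K.factorial : ℝ) * Real.exp K) :=
        mul_le_mul_of_nonneg_left h2 (by positivity)
    _ = Real.exp 1 ^ K * (n:ℝ)^K := by rw [heK]; field_simp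

set_option maxHeartbeats 2000000 in
lemma main_estimate (Δ : ℝ) (hΔ : Real.exp 200 ≤ Δ) :
    ∃ c : ℝ, 0 < c ∧ ∀ᶠ n : ℕ in Filter.atTop,
      (0:ℝ) ≤ Δ / n ∧ Δ / n ≤ 1 ∧
      ⌈(Real.log Δ - 3 * Real.log (Real.log Δ)) * n / Δ⌉₊ ≤ n ∧
      (n.choose ⌈(Real.log Δ - 3 * Real.log (Real.log Δ)) * n / Δ⌉₊ : ℝ) *
        (1 - (1 - Δ / n) ^ ⌈(Real.log Δ - 3 * Real.log (Real.log Δ)) * n / Δ⌉₊) ^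
          (n - ⌈(Real.log Δ - 3 * Real.log (Real.log Δ)) * n / Δ⌉₊)
        ≤ Real.exp (-(c * n)) := by
  have hΔ0 : (0:ℝ) < Δ := lt_of_lt_of_le (Real.exp_pos 200) hΔ
  set L := Real.log Δ with hLdef
  have hL : 200 ≤ L := by
    have := Real.log_le_log (Real.exp_pos 200) hΔ
    rwa [Real.log_exp] at this
  have hL0 : (0:ℝ) < L := by linarith
  have hlogL : Real.log L ≤ L / 6 := by
    rw [Real.log_le_iff_le_exp hL0]
    have h1 := sq_div_four_le_exp (show (0:ℝ) ≤ L/6 by linarith)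
    nlinarith [mul_nonneg hL0.le (show (0:ℝ) ≤ L - 144 by linarith)]
  have hlogL0 : 0 ≤ Real.log L := Real.log_nonneg (by linarith)
  set M := L - 3 * Real.log L with hMdef
  have hM2 : L / 2 ≤ M := by rw [hMdef]; linarith
  have hML : M ≤ L := by rw [hMdef]; linarith
  have hM100 : 100 ≤ M := by linarith
  have hexpl : Real.exp L = Δ := Real.exp_log hΔ0
  have h4L : 4 * L ≤ Δ := by
    have h1 := sq_div_four_le_exp hL0.le
    rw [hexpl] at h1
    nlinarith [mul_nonneg hL0.le (show (0:ℝ) ≤ L - 16 by linarith)]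
  have h4M : 4 * M ≤ Δ := by linarith
  have he1 : (0:ℝ) < Real.exp 1 := Real.exp_pos 1
  have he3 : Real.exp 1 < 3 := by
    have := Real.exp_one_lt_d9; linarith
  have he2 : (2:ℝ) ≤ Real.exp 1 := by
    have := Real.add_one_le_exp (1:ℝ); linarith
  refine ⟨L^3 / (2 * Real.exp 1 * Δ) - 4 * L^2 / Δ, ?_, ?_⟩
  · rw [sub_pos, div_lt_div_iff₀ hΔ0 (by positivity)]
    have h8e : 8 * Real.exp 1 < L := by linarith
    nlinarith [mul_lt_mul_of_pos_right h8e (mul_pos (mul_pos hL0 hL0) hΔ0)]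
  filter_upwards [Filter.eventually_ge_atTop 4,
    Filter.eventually_ge_atTop ⌈Δ * (M + 2)⌉₊] with n h4 hN
  have hn : Δ * (M + 2) ≤ (n:ℝ) := by
    have := Nat.le_ceil (Δ * (M + 2))
    exact le_trans this (by exact_mod_cast hN)
  have hn0 : (0:ℝ) < n := by
    have : (4:ℝ) ≤ n := by exact_mod_cast h4
    linarith
  have hn4 : (4:ℝ) ≤ n := by exact_mod_cast h4
  set x := Δ / (n:ℝ) with hxdef
  have hx0 : 0 ≤ x := by positivity
  have hxM : x ≤ 1 / (M + 2) := by
    rw [hxdef, div_le_div_iff₀ hn0 (by linarith)]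
    linarith
  have hx1 : x ≤ 1 := le_trans hxM (by rw [div_le_one (by linarith)]; linarith)
  set b := M * (n:ℝ) / Δ with hbdef
  have hbpos : 0 < b := by positivity
  set K := ⌈b⌉₊ with hKdef
  have hKb : b ≤ (K:ℝ) := Nat.le_ceil _
  have hKb1 : (K:ℝ) < b + 1 := Nat.ceil_lt_add_one hbpos.le
  have hbn4 : b ≤ (n:ℝ) / 4 := by
    rw [hbdef, div_le_div_iff₀ hΔ0 (by norm_num)]
    linarith [mul_le_mul_of_nonneg_right h4M hn0.le]
  have hKn2 : (K:ℝ) ≤ (n:ℝ) / 2 := by linarith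
  have hKn : K ≤ n := by
    have : (K:ℝ) ≤ (n:ℝ) := by linarith
    exact_mod_cast this
  have hK1 : 1 ≤ K := Nat.ceil_pos.mpr hbpos
  have hnΔ : Δ ≤ (n:ℝ) := by
    have h1 : Δ * 1 ≤ Δ * (M + 2) :=
      mul_le_mul_of_nonneg_left (by linarith) hΔ0.le
    linarith
  have hb1 : 1 ≤ b := by
    rw [hbdef, le_div_iff₀ hΔ0]
    have h1 : 1 * (n:ℝ) ≤ M * n :=
      mul_le_mul_of_nonneg_right (by linarith) hn0.le
    linarith
  have hK2b : (K:ℝ) ≤ 2 * b := by linarith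
  have h1x : 0 < 1 - x := by
    have : 1 / (M + 2) < 1 := by rw [div_lt_one (by linarith)]; linarith
    linarith
  have hnne : (n:ℝ) ≠ 0 := ne_of_gt hn0
  have hΔne : Δ ≠ 0 := ne_of_gt hΔ0
  have hbx : b * x = M := by
    rw [hbdef, hxdef]; field_simp
  have hKx : (K:ℝ) * x ≤ (M + 1) * (1 - x) := by
    have h1 : (K:ℝ) * x ≤ (b + 1) * x :=
      mul_le_mul_of_nonneg_right hKb1.le hx0
    have h2 : (b + 1) * x = M + x := by rw [add_mul, hbx, one_mul]
    have h3 : (M + 2) * x ≤ 1 := by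
      rw [mul_comm]
      calc x * (M + 2) ≤ (1 / (M + 2)) * (M + 2) :=
            mul_le_mul_of_nonneg_right hxM (by linarith)
        _ = 1 := by field_simp
    have h6 : (M + 1) * (1 - x) = M + 1 - (M + 2) * x + x := by ring
    linarith [h1, h2, h3]
  have hstep1 : Real.exp (-(x / (1 - x))) ≤ 1 - x := by
    have h := Real.add_one_le_exp (x / (1 - x))
    have heq : x / (1 - x) + 1 = 1 / (1 - x) := by field_simp; ring
    have h2 : 1 / (1 - x) ≤ Real.exp (x / (1 - x)) := by rw [← heq]; exact h
    rw [Real.exp_neg]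
    calc (Real.exp (x / (1 - x)))⁻¹ ≤ (1 / (1 - x))⁻¹ := by
          apply inv_anti₀ (by positivity) h2
      _ = 1 - x := by rw [one_div, inv_inv]
  have hqr_low : Real.exp (-(M + 1)) ≤ (1 - x) ^ K := by
    have h1 : Real.exp (-(x / (1 - x))) ^ K ≤ (1 - x) ^ K :=
      pow_le_pow_left₀ (Real.exp_pos _).le hstep1 K
    have h2 : Real.exp (-(x / (1 - x))) ^ K = Real.exp (-((K:ℝ) * (x / (1 - x)))) := by
      rw [← Real.exp_nat_mul]; congr 1; ring
    have h3 : (K:ℝ) * (x / (1 - x)) ≤ M + 1 := by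
      rw [mul_div_assoc', div_le_iff₀ h1x]
      linarith [hKx]
    have h4 : Real.exp (-(M + 1)) ≤ Real.exp (-((K:ℝ) * (x / (1 - x)))) := by
      apply Real.exp_le_exp.mpr; linarith
    calc Real.exp (-(M+1)) ≤ Real.exp (-((K:ℝ) * (x / (1 - x)))) := h4
      _ = Real.exp (-(x / (1 - x))) ^ K := h2.symm
      _ ≤ (1 - x) ^ K := h1
  have hq0 : Real.exp (-(M + 1)) = L^3 / (Real.exp 1 * Δ) := by
    have hMe : -(M + 1) = 3 * Real.log L - L - 1 := by rw [hMdef]; ring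
    rw [hMe, Real.exp_sub, Real.exp_sub]
    rw [show (3:ℝ) * Real.log L = Real.log (L ^ 3) by rw [Real.log_pow]; push_cast; ring,
      Real.exp_log (by positivity), hexpl]
    rw [div_div]
    ring_nf
  have hchoose : (n.choose K : ℝ) ≤ Real.exp (4 * L^2 * (n:ℝ) / Δ) := by
    have h1 : (n.choose K : ℝ) ≤ (Real.exp 1 * n / K) ^ K := choose_le_epow n K hK1
    have hKr0 : (0:ℝ) < K := by exact_mod_cast hK1
    have hy0 : (0:ℝ) < Real.exp 1 * n / K := by positivity
    have hKrn : (K:ℝ) ≤ (n:ℝ) := by exact_mod_cast hKn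
    have hy1 : (1:ℝ) ≤ Real.exp 1 * n / K := by
      rw [le_div_iff₀ hKr0]
      have h5 : 0 ≤ (Real.exp 1 - 1) * n :=
        mul_nonneg (by linarith) hn0.le
      nlinarith [h5, hKrn]
    have hbΔ : b * Δ = M * n := by
      rw [hbdef]; exact div_mul_cancel₀ _ hΔne
    have hyle : Real.exp 1 * n / K ≤ Real.exp 1 * Δ / M := by
      rw [div_le_div_iff₀ hKr0 (by linarith)]
      have hnM : (n:ℝ) * M ≤ (K:ℝ) * Δ := by
        have := mul_le_mul_of_nonneg_right hKb hΔ0.le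
        nlinarith [this, hbΔ]
      nlinarith [mul_le_mul_of_nonneg_left hnM he1.le]
    have hlogy : Real.log (Real.exp 1 * n / K) ≤ 1 + L := by
      calc Real.log (Real.exp 1 * n / K) ≤ Real.log (Real.exp 1 * Δ / M) :=
            Real.log_le_log hy0 hyle
        _ = 1 + L - Real.log M := by
            rw [Real.log_div (by positivity) (by linarith),
              Real.log_mul (by positivity) (by linarith), Real.log_exp]
        _ ≤ 1 + L := by
            have : 0 ≤ Real.log M := Real.log_nonneg (by linarith)
            linarith
    have hlogy0 : 0 ≤ Real.log (Real.exp 1 * n / K) := Real.log_nonneg hy1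
    have h2 : (Real.exp 1 * n / K) ^ K = Real.exp ((K:ℝ) * Real.log (Real.exp 1 * n / K)) := by
      rw [Real.exp_nat_mul, Real.exp_log hy0]
    have hbL : b ≤ L * (n:ℝ) / Δ := by
      rw [hbdef, div_le_div_iff₀ hΔ0 hΔ0]
      nlinarith [mul_le_mul_of_nonneg_right (mul_le_mul_of_nonneg_right hML hn0.le) hΔ0.le]

    have h3 : (K:ℝ) * Real.log (Real.exp 1 * n / K) ≤ 4 * L^2 * (n:ℝ) / Δ := by
      calc (K:ℝ) * Real.log (Real.exp 1 * n / K) ≤ (2 * b) * (1 + L) := by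
            apply mul_le_mul hK2b hlogy hlogy0 (by linarith)
        _ ≤ (2 * (L * n / Δ)) * (2 * L) := by
            apply mul_le_mul (by linarith) (by linarith) (by linarith) (by positivity)
        _ = 4 * L^2 * (n:ℝ) / Δ := by ring
    calc (n.choose K : ℝ) ≤ (Real.exp 1 * n / K) ^ K := h1
      _ = Real.exp ((K:ℝ) * Real.log (Real.exp 1 * n / K)) := h2
      _ ≤ Real.exp (4 * L^2 * (n:ℝ) / Δ) := Real.exp_le_exp.mpr h3
  set qr := (1 - x) ^ K with hqrdef
  have hqr0 : 0 ≤ qr := pow_nonneg h1x.le K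
  have hqr1 : qr ≤ 1 := pow_le_one₀ h1x.le (by linarith)
  have hdom : (1 - qr) ^ (n - K) ≤ Real.exp (-(L^3 / (Real.exp 1 * Δ) * ((n:ℝ) / 2))) := by
    have h1 : 1 - qr ≤ Real.exp (-qr) := by
      have := Real.add_one_le_exp (-qr); linarith
    have h2 : (1 - qr) ^ (n - K) ≤ Real.exp (-qr) ^ (n - K) :=
      pow_le_pow_left₀ (by linarith) h1 _
    have h3 : Real.exp (-qr) ^ (n - K) = Real.exp (-(qr * ((n - K : ℕ) : ℝ))) := by
      rw [← Real.exp_nat_mul]; congr 1; ring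
    have hcast : ((n - K : ℕ) : ℝ) = (n:ℝ) - (K:ℝ) := Nat.cast_sub hKn
    have h4 : L^3 / (Real.exp 1 * Δ) * ((n:ℝ) / 2) ≤ qr * ((n:ℝ) - (K:ℝ)) := by
      have hq0' : L^3 / (Real.exp 1 * Δ) ≤ qr := by rw [← hq0]; exact hqr_low
      have hnK : (n:ℝ) / 2 ≤ (n:ℝ) - (K:ℝ) := by linarith
      have hpos : 0 ≤ L^3 / (Real.exp 1 * Δ) := by positivity
      exact mul_le_mul hq0' hnK (by linarith) (by linarith)
    calc (1 - qr) ^ (n - K) ≤ Real.exp (-qr) ^ (n - K) := h2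
      _ = Real.exp (-(qr * ((n - K : ℕ) : ℝ))) := h3
      _ ≤ Real.exp (-(L^3 / (Real.exp 1 * Δ) * ((n:ℝ) / 2))) := by
          apply Real.exp_le_exp.mpr
          rw [hcast]
          linarith
  refine ⟨hx0, hx1, hKn, ?_⟩
  calc (n.choose K : ℝ) * (1 - qr) ^ (n - K)
      ≤ Real.exp (4 * L^2 * (n:ℝ) / Δ) * Real.exp (-(L^3 / (Real.exp 1 * Δ) * ((n:ℝ) / 2))) := by
        apply mul_le_mul hchoose hdom (pow_nonneg (by linarith) _) (Real.exp_pos _).le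
    _ = Real.exp (4 * L^2 * (n:ℝ) / Δ - L^3 / (Real.exp 1 * Δ) * ((n:ℝ) / 2)) := by
        rw [← Real.exp_add]; ring_nf
    _ ≤ Real.exp (-((L^3 / (2 * Real.exp 1 * Δ) - 4 * L^2 / Δ) * n)) := by
        apply Real.exp_le_exp.mpr
        apply le_of_eq
        field_simp
        try ring

lemma exp_neg_isLittleO (c : ℝ) (hc : 0 < c) :
    (fun n : ℕ => Real.exp (-(c * n))) =o[Filter.atTop]
      fun n : ℕ => (n : ℝ) ^ (-(1 : ℝ)/2) := by
  rw [Asymptotics.isLittleO_iff]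
  intro ε hε
  have h0 : Tendsto (fun x : ℝ => x ^ (1:ℕ) * Real.exp (-x)) atTop (nhds 0) :=
    tendsto_pow_mul_exp_neg_atTop_nhds_zero 1
  have hcomp : Tendsto (fun n : ℕ => c * (n:ℝ)) atTop atTop :=
    Tendsto.const_mul_atTop hc tendsto_natCast_atTop_atTop
  have h1 : Tendsto (fun n : ℕ => (c * n) * Real.exp (-(c * n))) atTop (nhds 0) := by
    have := h0.comp hcomp
    simpa [Function.comp_def] using this
  have h2 : Tendsto (fun n : ℕ => (n:ℝ) * Real.exp (-(c * n))) atTop (nhds 0) := by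
    have h3 := h1.const_mul (1/c)
    rw [mul_zero] at h3
    refine h3.congr fun n => ?_
    field_simp
  filter_upwards [h2.eventually_lt_const hε, Filter.eventually_ge_atTop 1] with n hlt h1n
  have hn0 : (0:ℝ) < n := by exact_mod_cast h1n
  have hb : (0:ℝ) < (n:ℝ) ^ ((1:ℝ)/2) := Real.rpow_pos_of_pos hn0 _
  rw [Real.norm_eq_abs, Real.norm_eq_abs, abs_of_pos (Real.exp_pos _),
    abs_of_pos (Real.rpow_pos_of_pos hn0 _)]
  rw [show -(1:ℝ)/2 = -((1:ℝ)/2) by ring, Real.rpow_neg hn0.le, ← div_eq_mul_inv,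
    le_div_iff₀ hb]
  have hle : (n:ℝ) ^ ((1:ℝ)/2) ≤ (n:ℝ) := by
    calc (n:ℝ) ^ ((1:ℝ)/2) ≤ (n:ℝ) ^ (1:ℝ) :=
          Real.rpow_le_rpow_of_exponent_le (by exact_mod_cast h1n) (by norm_num)
      _ = (n:ℝ) := Real.rpow_one _
  calc Real.exp (-(c * n)) * (n:ℝ) ^ ((1:ℝ)/2) ≤ Real.exp (-(c * n)) * (n:ℝ) :=
        mul_le_mul_of_nonneg_left hle (Real.exp_pos _).le
    _ = (n:ℝ) * Real.exp (-(c * n)) := by ring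
    _ ≤ ε := hlt.le

end aux

/-- In `G(n,p)` with `p = Δ/n` and `Δ` a sufficiently large constant, with probability
`1 - o(n^{-1/2})` every maximal independent set has size at least
`(log Δ - 3 log log Δ) · n / Δ`. -/
theorem gnp_maximal_independent_sets_large :
    ∃ Δ₀ : ℝ, ∀ Δ : ℝ, Δ₀ ≤ Δ →
      (fun n : ℕ =>
          ((gnp n (min 1 (ENNReal.ofReal (Δ / n))) (min_le_left _ _))
            {ω | ¬ ∀ I : Finset (Fin n),
              ((∀ u ∈ I, ∀ v ∈ I, ¬ adjOf ω u v) ∧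
               (∀ v : Fin n, v ∉ I → ∃ u ∈ I, adjOf ω u v)) →
              (Real.log Δ - 3 * Real.log (Real.log Δ)) * (n : ℝ) / Δ ≤ (I.card : ℝ)}).toReal)
        =o[Filter.atTop] fun n : ℕ => (n : ℝ) ^ (-(1 : ℝ)/2) := by
  refine ⟨Real.exp 200, fun Δ hΔ => ?_⟩
  obtain ⟨c, hc, hev⟩ := main_estimate Δ hΔ
  have hO : (fun n : ℕ =>
      ((gnp n (min 1 (ENNReal.ofReal (Δ / n))) (min_le_left _ _))
        {ω | ¬ ∀ I : Finset (Fin n),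
          ((∀ u ∈ I, ∀ v ∈ I, ¬ adjOf ω u v) ∧
           (∀ v : Fin n, v ∉ I → ∃ u ∈ I, adjOf ω u v)) →
          (Real.log Δ - 3 * Real.log (Real.log Δ)) * (n : ℝ) / Δ ≤ (I.card : ℝ)}).toReal)
      =O[Filter.atTop] (fun n : ℕ => Real.exp (-(c * n))) := by
    rw [Asymptotics.isBigO_iff]
    refine ⟨1, ?_⟩
    filter_upwards [hev] with n hn
    obtain ⟨hx0, hx1, hKn, hbound⟩ := hn
    have hb : ∀ m : ℕ, (m : ℝ) < (Real.log Δ - 3 * Real.log (Real.log Δ)) * n / Δ →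
        m ≤ ⌈(Real.log Δ - 3 * Real.log (Real.log Δ)) * n / Δ⌉₊ := fun m hm =>
      le_of_lt (by exact_mod_cast lt_of_lt_of_le hm (Nat.le_ceil _))
    have key := gnp_bad_toReal_le (n := n) (Δ / n)
      ((Real.log Δ - 3 * Real.log (Real.log Δ)) * n / Δ)
      ⌈(Real.log Δ - 3 * Real.log (Real.log Δ)) * n / Δ⌉₊ hx0 hx1 hKn hb
    rw [Real.norm_eq_abs, Real.norm_eq_abs, abs_of_nonneg ENNReal.toReal_nonneg,
      abs_of_pos (Real.exp_pos _), one_mul]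
    exact le_trans key hbound
  exact hO.trans_isLittleO (exp_neg_isLittleO c hc)
end
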